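/- For n ≡ 0 (mod 4), the monoid AM_n has rank n/2 + 1, i.e., the set {h, x_n, x_{n−1}, ..., x_{n/2+3}, x_{n/2+2}x_{n/2}⋯x_6x_4, x_{n/2+1}x_{n/2−1}⋯x_5x_3} of size n/2+1 generates AM_n, and no smaller set does. -/

import Mathlib

/-- Partial transformations on `Fin n`, represented as `Option`-valued maps. -/
abbrev PT (n : ℕ) := Fin n → Option (Fin n)

/-- Left-to-right composition of partial maps: `x (pcomp f g) = (x f) g`. -/
def pcomp {n : ℕ} (f g : PT n) : PT n := fun x => (f x).bind g

/-- The identity partial map. -/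
def pid (n : ℕ) : PT n := fun x => some x

instance PTMonoid (n : ℕ) : Monoid (PT n) where
  mul := pcomp
  one := pid n
  mul_assoc f g h := funext fun x => by
    show ((f x).bind g).bind h = (f x).bind fun y => (g y).bind h
    cases f x <;> rfl
  one_mul f := rfl
  mul_one f := funext fun x => by
    show (f x).bind (fun y => some y) = f x
    cases f x <;> rfl

/-- `f` is injective on its domain. -/
def pInj {n : ℕ} (f : PT n) : Prop := ∀ x y a, f x = some a → f y = some a → x = y

/-- The domain of a partial map. -/
def pDom {n : ℕ} (f : PT n) : Finset (Fin n) := Finset.univ.filter fun x => (f x).isSome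

/-- The image of a partial map. -/
def pIm {n : ℕ} (f : PT n) : Finset (Fin n) := Finset.univ.filter fun b => ∃ x, f x = some b

/-- The rank of a partial map is the size of its domain. -/
def prank {n : ℕ} (f : PT n) : ℕ := (pDom f).card

/-- Order-preserving partial maps. -/
def orderPres {n : ℕ} (f : PT n) : Prop :=
  ∀ x y a b, f x = some a → f y = some b → x ≤ y → a ≤ b

/-- Order-reversing partial maps. -/
def orderRev {n : ℕ} (f : PT n) : Prop :=
  ∀ x y a b, f x = some a → f y = some b → x ≤ y → b ≤ a

/-- Monotone partial maps. -/
def isMonotonePT {n : ℕ} (f : PT n) : Prop := orderPres f ∨ orderRev f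

/-- The permutation `σ` extends the partial map `f`. -/
def extendsTo {n : ℕ} (σ : Equiv.Perm (Fin n)) (f : PT n) : Prop :=
  ∀ x a, f x = some a → σ x = a

/-- Membership in the alternating inverse monoid `AI_n`: an injective partial map of
rank `≤ n - 2`, or one that extends to an even permutation. -/
def inAI {n : ℕ} (f : PT n) : Prop :=
  pInj f ∧ (prank f + 2 ≤ n ∨
    ∃ σ : Equiv.Perm (Fin n), σ ∈ alternatingGroup (Fin n) ∧ extendsTo σ f)

/-- `AO_n = AI_n ∩ POI_n`. -/
def AO (n : ℕ) : Set (PT n) := {f | orderPres f ∧ inAI f}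

/-- `AM_n = AI_n ∩ PMI_n`. -/
def AM (n : ℕ) : Set (PT n) := {f | isMonotonePT f ∧ inAI f}

/-- Green's `J`-relation relative to a submonoid-like subset `S` (containing the identity):
`a J b` iff each lies in the two-sided principal ideal of the other. -/
def JRelIn {n : ℕ} (S : Set (PT n)) (a b : PT n) : Prop :=
  (∃ u v, u ∈ S ∧ v ∈ S ∧ a = u * b * v) ∧ (∃ u v, u ∈ S ∧ v ∈ S ∧ b = u * a * v)

/-- The (unique) order-preserving bijection from `Fin n \ {i}` onto `Fin n \ {j}`. -/
def opBij {n : ℕ} (i j : Fin n) : PT n := fun x =>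
  if hx : x = i then none
  else if hlt : x.val < i.val then
    (if hp : x.val < j.val then some ⟨x.val, lt_trans hp j.isLt⟩
     else some ⟨x.val + 1, by have := i.isLt; omega⟩)
  else
    (if hp : x.val - 1 < j.val then some ⟨x.val - 1, lt_trans hp j.isLt⟩
     else some ⟨x.val, x.isLt⟩)

/-- The generators `x_1, …, x_n` of `AO_n` (indexed 1-based by `i`):
`x_1 : X_1 → X_n` (`n` odd) or `X_1 → X_{n-1}` (`n` even); `x_2 : X_2 → X_{n-1}` (`n` odd)
or `X_2 → X_n` (`n` even); `x_i : X_i → X_{i-2}` for `3 ≤ i ≤ n`. -/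
def xg (n : ℕ) (hn : 2 ≤ n) (i : ℕ) : PT n :=
  if h3 : 3 ≤ i ∧ i ≤ n then opBij ⟨i - 1, by omega⟩ ⟨i - 3, by omega⟩
  else if i = 1 then
    opBij ⟨0, by omega⟩ (if n % 2 = 1 then ⟨n - 1, by omega⟩ else ⟨n - 2, by omega⟩)
  else
    opBij ⟨1, by omega⟩ (if n % 2 = 1 then ⟨n - 2, by omega⟩ else ⟨n - 1, by omega⟩)

/-- The generating set `{x_1, …, x_n}` of `AO_n`. -/
def AOgens (n : ℕ) (hn : 2 ≤ n) : Set (PT n) :=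
  {f | ∃ i : ℕ, 1 ≤ i ∧ i ≤ n ∧ f = xg n hn i}

/-- The order-reversing permutation `k ↦ n + 1 - k` as a partial map. -/
def hPT (n : ℕ) : PT n := fun x => some x.rev

/-- The descending product `x_{base+2(m-1)} x_{base+2(m-2)} ⋯ x_{base+2} x_base`
(left-to-right composition). -/
def descChain (n : ℕ) (hn : 2 ≤ n) (base m : ℕ) : PT n :=
  (((List.range m).map fun t => xg n hn (base + 2 * t)).reverse).prod

/-- The candidate generating set
`{h, x_n, …, x_{n/2+3}, x_{n/2+2} x_{n/2} ⋯ x_6 x_4, x_{n/2+1} x_{n/2-1} ⋯ x_5 x_3}`. -/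
def AMgens0 (n : ℕ) (hn : 2 ≤ n) : Set (PT n) :=
  {f | f = hPT n ∨ (∃ i : ℕ, n / 2 + 3 ≤ i ∧ i ≤ n ∧ f = xg n hn i) ∨
       f = descChain n hn 4 (n / 4) ∨ f = descChain n hn 3 (n / 4)}
section Basic
open Classical
variable {n : ℕ}

lemma pmul_apply (f g : PT n) (x : Fin n) : (f * g) x = (f x).bind g := rfl

lemma pone_apply (x : Fin n) : (1 : PT n) x = some x := rfl

lemma pmul_eq_some {f g : PT n} {x : Fin n} {b : Fin n} :
    (f * g) x = some b ↔ ∃ m, f x = some m ∧ g m = some b := by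
  rw [pmul_apply]; cases h : f x <;> simp [h]

lemma pmul_eq_none {f g : PT n} {x : Fin n} :
    (f * g) x = none ↔ f x = none ∨ ∃ m, f x = some m ∧ g m = none := by
  rw [pmul_apply]; cases h : f x <;> simp [h]

lemma mem_pDom {f : PT n} {x : Fin n} : x ∈ pDom f ↔ ∃ a, f x = some a := by
  simp only [pDom, Finset.mem_filter, Finset.mem_univ, true_and]
  cases h : f x <;> simp [h]

lemma mem_pIm {f : PT n} {b : Fin n} : b ∈ pIm f ↔ ∃ x, f x = some b := by
  simp [pIm]

lemma pInj_mul {f g : PT n} (hf : pInj f) (hg : pInj g) : pInj (f * g) := by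
  intro x y a hx hy
  rcases pmul_eq_some.1 hx with ⟨m, hm1, hm2⟩
  rcases pmul_eq_some.1 hy with ⟨m', hm1', hm2'⟩
  have := hg m m' a hm2 hm2'
  subst this
  exact hf x y m hm1 hm1'

lemma orderPres_mul {f g : PT n} (hf : orderPres f) (hg : orderPres g) :
    orderPres (f * g) := by
  intro x y a b hx hy hxy
  rcases pmul_eq_some.1 hx with ⟨m, hm1, hm2⟩
  rcases pmul_eq_some.1 hy with ⟨m', hm1', hm2'⟩
  exact hg m m' a b hm2 hm2' (hf x y m m' hm1 hm1' hxy)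

lemma isMonotonePT_mul {f g : PT n} (hf : isMonotonePT f) (hg : isMonotonePT g) :
    isMonotonePT (f * g) := by
  rcases hf with hf | hf <;> rcases hg with hg | hg
  · left; exact orderPres_mul hf hg
  · right; intro x y a b hx hy hxy
    rcases pmul_eq_some.1 hx with ⟨m, hm1, hm2⟩
    rcases pmul_eq_some.1 hy with ⟨m', hm1', hm2'⟩
    exact hg m m' a b hm2 hm2' (hf x y m m' hm1 hm1' hxy)
  · right; intro x y a b hx hy hxy
    rcases pmul_eq_some.1 hx with ⟨m, hm1, hm2⟩
    rcases pmul_eq_some.1 hy with ⟨m', hm1', hm2'⟩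
    exact hg m' m b a hm2' hm2 (hf x y m m' hm1 hm1' hxy)
  · left; intro x y a b hx hy hxy
    rcases pmul_eq_some.1 hx with ⟨m, hm1, hm2⟩
    rcases pmul_eq_some.1 hy with ⟨m', hm1', hm2'⟩
    exact hg m' m b a hm2' hm2 (hf x y m m' hm1 hm1' hxy)

lemma pDom_mul_subset (f g : PT n) : pDom (f * g) ⊆ pDom f := by
  intro x hx
  rcases mem_pDom.1 hx with ⟨a, ha⟩
  rcases pmul_eq_some.1 ha with ⟨m, hm, _⟩
  exact mem_pDom.2 ⟨m, hm⟩

lemma pIm_mul_subset (f g : PT n) : pIm (f * g) ⊆ pIm g := by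
  intro b hb
  rcases mem_pIm.1 hb with ⟨x, hx⟩
  rcases pmul_eq_some.1 hx with ⟨m, _, hm⟩
  exact mem_pIm.2 ⟨m, hm⟩

lemma prank_mul_le_left (f g : PT n) : prank (f * g) ≤ prank f :=
  Finset.card_le_card (pDom_mul_subset f g)

/-- total helper used to realize f as an image map -/
noncomputable def fh (f : PT n) (hn0 : 0 < n) : Fin n → Fin n :=
  fun x => (f x).getD ⟨0, hn0⟩

lemma pIm_eq_image {f : PT n} (hn0 : 0 < n) :
    pIm f = (pDom f).image (fh f hn0) := by
  ext b
  simp only [mem_pIm, Finset.mem_image]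
  constructor
  · rintro ⟨x, hx⟩
    exact ⟨x, mem_pDom.2 ⟨b, hx⟩, by simp [fh, hx]⟩
  · rintro ⟨x, hx, hfx⟩
    rcases mem_pDom.1 hx with ⟨a, ha⟩
    exact ⟨x, by rw [ha]; simp [fh, ha] at hfx; rw [hfx]⟩

lemma prank_eq_im_card {f : PT n} (hf : pInj f) (hn0 : 0 < n) :
    (pIm f).card = prank f := by
  rw [pIm_eq_image hn0, prank]
  apply Finset.card_image_of_injOn
  intro x hx y hy hxy
  rcases mem_pDom.1 hx with ⟨a, ha⟩
  rcases mem_pDom.1 hy with ⟨b, hb⟩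
  simp [fh, ha, hb] at hxy
  subst hxy
  exact hf x y a ha hb

lemma prank_mul_le_right {f : PT n} (g : PT n) (hf : pInj f) (hn0 : 0 < n) :
    prank (f * g) ≤ prank g := by
  have himg : (pDom (f * g)).image (fh f hn0) ⊆ pDom g := by
    intro m hm
    rcases Finset.mem_image.1 hm with ⟨x, hx, hfx⟩
    rcases mem_pDom.1 hx with ⟨b, hb⟩
    rcases pmul_eq_some.1 hb with ⟨m', hm', hg'⟩
    simp [fh, hm'] at hfx
    subst hfx
    exact mem_pDom.2 ⟨b, hg'⟩
  have hinj : Set.InjOn (fh f hn0) (pDom (f * g)) := by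
    intro x hx y hy hxy
    rcases mem_pDom.1 hx with ⟨b, hb⟩
    rcases mem_pDom.1 hy with ⟨b', hb'⟩
    rcases pmul_eq_some.1 hb with ⟨m, hm, _⟩
    rcases pmul_eq_some.1 hb' with ⟨m', hm'', _⟩
    simp [fh, hm, hm''] at hxy
    subst hxy
    exact hf x y m hm hm''
  calc prank (f * g) = ((pDom (f * g)).image (fh f hn0)).card :=
        (Finset.card_image_of_injOn hinj).symm
    _ ≤ (pDom g).card := Finset.card_le_card himg
    _ = prank g := rfl

end Basic
section Pinv
open Classical
variable {n : ℕ}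

/-- inverse of a partial injection -/
noncomputable def pinv (f : PT n) : PT n :=
  fun b => if h : ∃ a, f a = some b then some h.choose else none

lemma pinv_eq_some_of {f : PT n} {a b : Fin n} (h : pinv f b = some a) :
    f a = some b := by
  unfold pinv at h
  split_ifs at h with hex
  · have := hex.choose_spec
    rw [Option.some.injEq] at h
    rwa [h] at this

lemma pinv_eq_some {f : PT n} (hf : pInj f) {a b : Fin n} :
    pinv f b = some a ↔ f a = some b := by
  constructor
  · exact pinv_eq_some_of
  · intro h
    unfold pinv
    have hex : ∃ a, f a = some b := ⟨a, h⟩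
    rw [dif_pos hex, Option.some.injEq]
    exact hf _ _ _ hex.choose_spec h

lemma pinv_eq_none {f : PT n} {b : Fin n} :
    pinv f b = none ↔ ∀ a, f a ≠ some b := by
  unfold pinv
  split_ifs with hex
  · simp only [iff_false_intro (Option.some_ne_none _), false_iff]
    push_neg
    exact ⟨hex.choose, hex.choose_spec⟩
  · push_neg at hex
    simp [hex]

lemma pInj_pinv (f : PT n) : pInj (pinv f) := by
  intro x y a hx hy
  have h1 := pinv_eq_some_of hx
  have h2 := pinv_eq_some_of hy
  rw [h1] at h2
  exact Option.some.inj h2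

lemma pinv_pinv {f : PT n} (hf : pInj f) : pinv (pinv f) = f := by
  funext x
  cases h : f x with
  | none =>
    rw [pinv_eq_none]
    intro a ha
    have := pinv_eq_some_of ha
    rw [h] at this; cases this
  | some a =>
    rw [pinv_eq_some (pInj_pinv f), pinv_eq_some hf]
    exact h

lemma pDom_pinv {f : PT n} (hf : pInj f) : pDom (pinv f) = pIm f := by
  ext x
  rw [mem_pDom, mem_pIm]
  constructor
  · rintro ⟨a, ha⟩; exact ⟨a, pinv_eq_some_of ha⟩
  · rintro ⟨a, ha⟩; exact ⟨a, (pinv_eq_some hf).2 ha⟩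

lemma pIm_pinv {f : PT n} (hf : pInj f) : pIm (pinv f) = pDom f := by
  ext b
  rw [mem_pIm, mem_pDom]
  constructor
  · rintro ⟨x, hx⟩; exact ⟨x, pinv_eq_some_of hx⟩
  · rintro ⟨x, hx⟩; exact ⟨x, (pinv_eq_some hf).2 hx⟩

lemma orderPres_pinv {f : PT n} (hf : pInj f) (hp : orderPres f) :
    orderPres (pinv f) := by
  intro x y a b hx hy hxy
  have h1 := pinv_eq_some_of hx
  have h2 := pinv_eq_some_of hy
  by_contra hab
  push_neg at hab
  have : y ≤ x := hp b a y x h2 h1 (le_of_lt hab)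
  have hxy2 : x = y := le_antisymm hxy this
  subst hxy2
  have hab2 : a = b := hf a b x h1 h2
  rw [hab2] at hab
  exact lt_irrefl _ hab

lemma pinv_mul {f g : PT n} (hf : pInj f) (hg : pInj g) :
    pinv (f * g) = pinv g * pinv f := by
  have hfg : pInj (f * g) := pInj_mul hf hg
  funext b
  cases h : (pinv g * pinv f) b with
  | some a =>
    rcases pmul_eq_some.1 h with ⟨m, hm1, hm2⟩
    rw [pinv_eq_some hfg]
    exact pmul_eq_some.2 ⟨m, pinv_eq_some_of hm2, pinv_eq_some_of hm1⟩
  | none =>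
    rw [pinv_eq_none]
    intro a ha
    rcases pmul_eq_some.1 ha with ⟨m, hm1, hm2⟩
    rcases pmul_eq_none.1 h with h1 | ⟨m', hm', hg'⟩
    · rw [pinv_eq_none] at h1
      exact h1 m hm2
    · have := pinv_eq_some_of hm'
      have hmm : m = m' := hg _ _ _ hm2 this
      subst hmm
      rw [pinv_eq_none] at hg'
      exact hg' a hm1

end Pinv
section OpBij
variable {n : ℕ}

/-- ℕ-level value of opBij -/
def obf (i j x : ℕ) : ℕ :=
  if x < i then (if x < j then x else x + 1)
  else (if x - 1 < j then x - 1 else x)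

lemma obf_lt {i j x : ℕ} (hi : i < n) (hj : j < n) (hx : x < n) : obf i j x < n := by
  unfold obf; split_ifs <;> omega

lemma opBij_apply (i j x : Fin n) :
    opBij i j x = if x = i then none else some ⟨obf i.val j.val x.val,
      obf_lt i.isLt j.isLt x.isLt⟩ := by
  unfold opBij obf
  split_ifs with h1 h2 h3 h4 h5 h6 h7 <;> first
    | rfl
    | (exfalso; omega)

lemma opBij_none (i j : Fin n) : opBij i j i = none := by
  rw [opBij_apply, if_pos rfl]

lemma opBij_eq_some {i j x a : Fin n} :
    opBij i j x = some a ↔ x ≠ i ∧ a.val = obf i.val j.val x.val := by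
  rw [opBij_apply]
  split_ifs with h
  · simp [h]
  · simp only [Option.some.injEq, h, ne_eq, not_false_iff, true_and]
    constructor
    · intro he; rw [← he]
    · intro hv; exact Fin.ext hv.symm

lemma obf_ne {i j x : ℕ} (hx : x ≠ i) : obf i j x ≠ j := by
  unfold obf; split_ifs <;> omega

lemma obf_obf {i k j x : ℕ} (hx : x ≠ i) (hi : i < n) (hk : k < n) (hj : j < n)
    (hxn : x < n) : obf k j (obf i k x) = obf i j x := by
  unfold obf; split_ifs <;> omega

lemma pInj_opBij (i j : Fin n) : pInj (opBij i j) := by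
  intro x y a hx hy
  rw [opBij_eq_some] at hx hy
  apply Fin.ext
  have h1 := hx.2; have h2 := hy.2
  have hx1 : x.val ≠ i.val := fun h => hx.1 (Fin.ext h)
  have hy1 : y.val ≠ i.val := fun h => hy.1 (Fin.ext h)
  have key : obf i.val j.val x.val = obf i.val j.val y.val := by rw [← h1, ← h2]
  have hxn := x.isLt; have hyn := y.isLt; have hjn := j.isLt
  unfold obf at key
  split_ifs at key <;> omega

lemma orderPres_opBij (i j : Fin n) : orderPres (opBij i j) := by
  intro x y a b hx hy hxy
  rw [opBij_eq_some] at hx hy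
  have h1 := hx.2; have h2 := hy.2
  have hxy' : x.val ≤ y.val := hxy
  show a.val ≤ b.val
  rw [h1, h2]
  unfold obf; split_ifs <;> omega

lemma opBij_comp (i k j : Fin n) : opBij i k * opBij k j = opBij i j := by
  funext x
  by_cases hx : x = i
  · subst hx
    rw [pmul_apply, opBij_none, opBij_none]; rfl
  · have h1 : opBij i k x = some ⟨obf i.val k.val x.val, obf_lt i.isLt k.isLt x.isLt⟩ := by
      rw [opBij_apply, if_neg hx]
    rw [pmul_apply, h1]
    have hne : (⟨obf i.val k.val x.val, obf_lt i.isLt k.isLt x.isLt⟩ : Fin n) ≠ k := by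
      intro h
      exact obf_ne (fun hh => hx (Fin.ext hh)) (congrArg Fin.val h)
    rw [Option.bind_some, opBij_apply, if_neg hne, opBij_apply, if_neg hx]
    congr 1
    apply Fin.ext
    exact obf_obf (fun hh => hx (Fin.ext hh)) i.isLt k.isLt j.isLt x.isLt

/-- partial identity on a finset -/
def pidOn (A : Finset (Fin n)) : PT n := fun x => if x ∈ A then some x else none

lemma pidOn_eq_some {A : Finset (Fin n)} {x a : Fin n} :
    pidOn A x = some a ↔ x ∈ A ∧ x = a := by
  unfold pidOn; split_ifs with h <;> simp [h, eq_comm]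

lemma pidOn_univ : pidOn (Finset.univ : Finset (Fin n)) = 1 := by
  funext x; simp [pidOn]; rfl

lemma pidOn_mul (A B : Finset (Fin n)) : pidOn A * pidOn B = pidOn (A ∩ B) := by
  funext x
  rw [pmul_apply]
  unfold pidOn
  by_cases hA : x ∈ A <;> by_cases hB : x ∈ B <;>
    simp [hA, hB, Finset.mem_inter]

lemma pidOn_mul_eq_self {A : Finset (Fin n)} {f : PT n} (h : pDom f ⊆ A) :
    pidOn A * f = f := by
  funext x
  rw [pmul_apply]
  unfold pidOn
  by_cases hA : x ∈ A
  · simp [hA]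
  · simp only [if_neg hA, Option.bind_none]
    cases hfx : f x with
    | none => rfl
    | some a => exact absurd (h (mem_pDom.2 ⟨a, hfx⟩)) hA

lemma pDom_pidOn (A : Finset (Fin n)) : pDom (pidOn A) = A := by
  ext x
  rw [mem_pDom]
  constructor
  · rintro ⟨a, ha⟩; exact (pidOn_eq_some.1 ha).1
  · intro h; exact ⟨x, pidOn_eq_some.2 ⟨h, rfl⟩⟩

lemma pIm_pidOn (A : Finset (Fin n)) : pIm (pidOn A) = A := by
  ext x
  rw [mem_pIm]
  constructor
  · rintro ⟨a, ha⟩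
    rcases pidOn_eq_some.1 ha with ⟨h1, h2⟩
    subst h2; exact h1
  · intro h; exact ⟨x, pidOn_eq_some.2 ⟨h, rfl⟩⟩

lemma pInj_pidOn (A : Finset (Fin n)) : pInj (pidOn A) := by
  intro x y a hx hy
  rw [(pidOn_eq_some.1 hx).2, (pidOn_eq_some.1 hy).2]

lemma orderPres_pidOn (A : Finset (Fin n)) : orderPres (pidOn A) := by
  intro x y a b hx hy hxy
  rw [← (pidOn_eq_some.1 hx).2, ← (pidOn_eq_some.1 hy).2]
  exact hxy

lemma pinv_pidOn (A : Finset (Fin n)) : pinv (pidOn A) = pidOn A := by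
  funext b
  cases h : pidOn A b with
  | some a =>
    rcases pidOn_eq_some.1 h with ⟨h1, h2⟩
    subst h2
    rw [pinv_eq_some (pInj_pidOn A)]
    exact h
  | none =>
    rw [pinv_eq_none]
    intro a ha
    rcases pidOn_eq_some.1 ha with ⟨h1, h2⟩
    subst h2
    unfold pidOn at h
    rw [if_pos h1] at h
    cases h

lemma pinv_opBij (i j : Fin n) : pinv (opBij i j) = opBij j i := by
  funext b
  cases h : opBij j i b with
  | some a =>
    rw [pinv_eq_some (pInj_opBij i j)]
    rcases opBij_eq_some.1 h with ⟨hbj, hav⟩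
    rw [opBij_eq_some]
    have hbj' : b.val ≠ j.val := fun hh => hbj (Fin.ext hh)
    have hbn := b.isLt; have hjn := j.isLt; have hin := i.isLt
    constructor
    · intro hai
      have hv : a.val = i.val := congrArg Fin.val hai
      rw [hav] at hv
      unfold obf at hv
      split_ifs at hv <;> omega
    · rw [hav]
      have h2 : obf i.val j.val (obf j.val i.val b.val) = obf j.val j.val b.val :=
        obf_obf hbj' j.isLt i.isLt j.isLt b.isLt
      rw [h2]
      unfold obf
      split_ifs <;> omega
  | none =>
    rw [pinv_eq_none]
    intro a ha
    rcases opBij_eq_some.1 ha with ⟨hai, hbv⟩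
    have : b = j := by
      by_contra hbj
      rw [opBij_apply, if_neg hbj] at h
      cases h
    subst this
    exact obf_ne (fun hh => hai (Fin.ext hh)) hbv.symm

lemma pDom_opBij (i j : Fin n) : pDom (opBij i j) = Finset.univ.erase i := by
  ext x
  rw [mem_pDom, Finset.mem_erase]
  constructor
  · rintro ⟨a, ha⟩
    exact ⟨(opBij_eq_some.1 ha).1, Finset.mem_univ x⟩
  · rintro ⟨hx, -⟩
    exact ⟨⟨obf i.val j.val x.val, obf_lt i.isLt j.isLt x.isLt⟩,
      opBij_eq_some.2 ⟨hx, rfl⟩⟩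

lemma pIm_opBij (i j : Fin n) : pIm (opBij i j) = Finset.univ.erase j := by
  have h := pDom_pinv (pInj_opBij i j)
  rw [pinv_opBij, pDom_opBij] at h
  exact h.symm

lemma prank_opBij (i j : Fin n) : prank (opBij i j) = n - 1 := by
  rw [prank, pDom_opBij, Finset.card_erase_of_mem (Finset.mem_univ i)]
  simp

end OpBij
section HPT
variable {n : ℕ}

lemma hPT_apply (x : Fin n) : hPT n x = some x.rev := rfl

lemma hPT_mul_hPT : hPT n * hPT n = 1 := by
  funext x
  rw [pmul_apply, hPT_apply, Option.bind_some, hPT_apply, Fin.rev_rev]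
  rfl

lemma hPT_mul_apply (f : PT n) (x : Fin n) : (hPT n * f) x = f x.rev := by
  rw [pmul_apply, hPT_apply, Option.bind_some]

lemma rev_val (x : Fin n) : (x.rev).val = n - 1 - x.val := by
  rcases x with ⟨v, hv⟩
  simp [Fin.rev]
  omega

lemma hPT_conj_opBij (i j : Fin n) :
    hPT n * opBij i j * hPT n = opBij i.rev j.rev := by
  funext x
  rw [pmul_apply, hPT_mul_apply]
  by_cases hx : x = i.rev
  · have : x.rev = i := by rw [hx, Fin.rev_rev]
    rw [this, opBij_none, hx, opBij_none]
    rfl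
  · have hxr : x.rev ≠ i := by
      intro h
      apply hx
      rw [← h, Fin.rev_rev]
    rw [opBij_apply, if_neg hxr, Option.bind_some, hPT_apply,
      opBij_apply, if_neg hx]
    congr 1
    apply Fin.ext
    simp only [rev_val]
    have h1 : x.val < n := x.isLt
    have h2 : i.val < n := i.isLt
    have h3 : j.val < n := j.isLt
    have hxv : x.val ≠ n - 1 - i.val := by
      intro h
      apply hx
      apply Fin.ext
      rw [rev_val, h]
    have hxrv : n - 1 - x.val ≠ i.val := by omega
    unfold obf
    split_ifs <;> omega

lemma pInj_hPT : pInj (hPT n) := by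
  intro x y a hx hy
  rw [hPT_apply, Option.some.injEq] at hx hy
  rw [← Fin.rev_rev x, ← Fin.rev_rev y, hx, hy]

lemma orderRev_hPT : orderRev (hPT n) := by
  intro x y a b hx hy hxy
  rw [hPT_apply, Option.some.injEq] at hx hy
  subst hx; subst hy
  show (y.rev).val ≤ (x.rev).val
  rw [rev_val, rev_val]
  have : x.val ≤ y.val := hxy
  omega

lemma pDom_hPT : pDom (hPT n) = Finset.univ := by
  ext x; simp [mem_pDom, hPT_apply]

lemma prank_hPT : prank (hPT n) = n := by
  rw [prank, pDom_hPT, Finset.card_univ, Fintype.card_fin]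

lemma pDom_hPT_mul (f : PT n) : pDom (hPT n * f) = (pDom f).image Fin.rev := by
  ext x
  rw [mem_pDom, Finset.mem_image]
  constructor
  · rintro ⟨a, ha⟩
    rw [hPT_mul_apply] at ha
    exact ⟨x.rev, mem_pDom.2 ⟨a, ha⟩, Fin.rev_rev x⟩
  · rintro ⟨y, hy, hyx⟩
    rcases mem_pDom.1 hy with ⟨a, ha⟩
    refine ⟨a, ?_⟩
    rw [hPT_mul_apply, ← hyx, Fin.rev_rev]
    exact ha

end HPT
section Perms
open Equiv
variable {n : ℕ}

/-- Fin element from ℕ via mod -/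
def fm (hn : 0 < n) (m : ℕ) : Fin n := ⟨m % n, Nat.mod_lt m hn⟩

lemma fm_val (hn : 0 < n) {m : ℕ} (h : m < n) : (fm hn m).val = m := Nat.mod_eq_of_lt h

lemma swap_val (a b x : Fin n) :
    ((Equiv.swap a b) x).val =
      if x.val = a.val then b.val else if x.val = b.val then a.val else x.val := by
  rcases eq_or_ne x a with h | h
  · subst h; rw [Equiv.swap_apply_left, if_pos rfl]
  · rcases eq_or_ne x b with h2 | h2
    · subst h2
      rw [Equiv.swap_apply_right, if_neg (fun hh => h (Fin.ext hh)), if_pos rfl]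
    · rw [Equiv.swap_apply_of_ne_of_ne h h2, if_neg (fun hh => h (Fin.ext hh)),
        if_neg (fun hh => h2 (Fin.ext hh))]

/-- list of adjacent swaps shifting [j, j+d] -/
def spList (hn : 0 < n) (j d : ℕ) : List (Equiv.Perm (Fin n)) :=
  (List.range d).map (fun t => Equiv.swap (fm hn (j + t)) (fm hn (j + t + 1)))

lemma spList_succ (hn : 0 < n) (j d : ℕ) :
    spList hn j (d + 1) =
      Equiv.swap (fm hn j) (fm hn (j + 1)) :: spList (n := n) hn (j + 1) d := by
  unfold spList
  rw [List.range_succ_eq_map, List.map_cons, List.map_map]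
  congr 1
  apply List.map_congr_left
  intro t _
  simp only [Function.comp]
  congr 2 <;> omega

/-- the cyclic shift permutation on [j, j+d] -/
def sp (hn : 0 < n) (j d : ℕ) : Equiv.Perm (Fin n) := (spList hn j d).prod

lemma sp_val (hn : 0 < n) : ∀ d j, j + d < n → ∀ x : Fin n,
    ((sp hn j d) x).val = if x.val < j ∨ j + d < x.val then x.val
      else if x.val = j + d then j else x.val + 1 := by
  intro d
  induction d with
  | zero =>
    intro j hj x
    show x.val = _
    have := x.isLt
    split_ifs <;> omega
  | succ d ih =>
    intro j hj x
    have hsp : sp hn j (d+1) = Equiv.swap (fm hn j) (fm hn (j+1)) * sp hn (j+1) d := by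
      unfold sp; rw [spList_succ, List.prod_cons]
    rw [hsp, Equiv.Perm.mul_apply, swap_val, fm_val hn (by omega), fm_val hn (by omega),
      ih (j+1) (by omega) x]
    have := x.isLt
    split_ifs <;> omega

lemma sp_sign (hn : 0 < n) {j d : ℕ} (h : j + d < n) :
    Equiv.Perm.sign (sp hn j d) = (-1) ^ d := by
  have hlen : (spList (n := n) hn j d).length = d := by
    unfold spList; simp
  have hs : ∀ g ∈ spList (n := n) hn j d, g.IsSwap := by
    intro g hg
    unfold spList at hg
    rcases List.mem_map.1 hg with ⟨t, ht, rfl⟩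
    rw [List.mem_range] at ht
    refine ⟨_, _, ?_, rfl⟩
    intro he
    have := congrArg Fin.val he
    rw [fm_val hn (by omega), fm_val hn (by omega)] at this
    omega
  have := Equiv.Perm.sign_prod_list_swap hs
  rw [hlen] at this
  exact this

lemma extendsTo_sp (hn : 0 < n) (i j : Fin n) (hji : j.val ≤ i.val) :
    extendsTo (sp hn j.val (i.val - j.val)) (opBij i j) := by
  intro x a ha
  rcases opBij_eq_some.1 ha with ⟨hxi, hav⟩
  have hav' : a.val = obf i.val j.val x.val := hav
  have hxv : x.val ≠ i.val := fun hh => hxi (Fin.ext hh)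
  have hx := x.isLt
  have hi := i.isLt
  apply Fin.ext
  rw [sp_val hn (i.val - j.val) j.val (by omega) x]
  unfold obf at hav'
  split_ifs at hav' <;> split_ifs <;> omega

lemma extendsTo_sp_inv (hn : 0 < n) (i j : Fin n) (hij : i.val ≤ j.val) :
    extendsTo (sp hn i.val (j.val - i.val))⁻¹ (opBij i j) := by
  intro x a ha
  rcases opBij_eq_some.1 ha with ⟨hxi, hav⟩
  have hav' : a.val = obf i.val j.val x.val := hav
  have hxv : x.val ≠ i.val := fun hh => hxi (Fin.ext hh)
  have hx := x.isLt
  have hj := j.isLt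
  have ha' := a.isLt
  rw [Equiv.Perm.inv_eq_iff_eq]
  apply Fin.ext
  rw [sp_val hn (j.val - i.val) i.val (by omega) a]
  unfold obf at hav'
  split_ifs at hav' <;> split_ifs <;> omega

/-- permutations agreeing off one point agree -/
lemma perm_eq_of_agree_off {σ τ : Equiv.Perm (Fin n)} (i : Fin n)
    (h : ∀ x, x ≠ i → σ x = τ x) : σ = τ := by
  apply Equiv.ext
  intro x
  by_cases hx : x = i
  · subst hx
    by_contra hne
    have hs : σ⁻¹ (τ x) ≠ x := by
      intro hh
      apply hne
      have := congrArg σ hh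
      rw [Equiv.Perm.inv_def, Equiv.apply_symm_apply] at this
      exact this.symm
    have h1 := h (σ⁻¹ (τ x)) hs
    have h2 : τ (σ⁻¹ (τ x)) = τ x := by rw [← h1, Equiv.Perm.inv_def, Equiv.apply_symm_apply]
    exact hs (τ.injective h2)
  · exact h x hx

lemma extendsTo_unique {f : PT n} {σ τ : Equiv.Perm (Fin n)}
    (hr : prank f = n - 1) (hn : 1 ≤ n)
    (hσ : extendsTo σ f) (hτ : extendsTo τ f) : σ = τ := by
  have hr' : (pDom f).card = n - 1 := hr
  have hcompl : (Finset.univ \ pDom f).card = 1 := by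
    rw [Finset.card_sdiff_of_subset (Finset.subset_univ _), Finset.card_univ, Fintype.card_fin, hr']
    omega
  rcases Finset.card_eq_one.1 hcompl with ⟨i, hi⟩
  apply perm_eq_of_agree_off i
  intro x hx
  have hxd : x ∈ pDom f := by
    by_contra hxd
    have : x ∈ Finset.univ \ pDom f := Finset.mem_sdiff.2 ⟨Finset.mem_univ x, hxd⟩
    rw [hi, Finset.mem_singleton] at this
    exact hx this
  rcases mem_pDom.1 hxd with ⟨a, ha⟩
  rw [hσ x a ha, hτ x a ha]

/-- existence of an extension of opBij with controlled sign -/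
lemma opBij_ext (hn : 0 < n) (i j : Fin n) :
    ∃ σ : Equiv.Perm (Fin n), extendsTo σ (opBij i j) ∧
      Equiv.Perm.sign σ = (-1) ^ (i.val - j.val + (j.val - i.val)) := by
  rcases le_or_gt j.val i.val with hle | hlt
  · refine ⟨sp hn j.val (i.val - j.val), extendsTo_sp hn i j hle, ?_⟩
    rw [sp_sign hn (by have := i.isLt; omega)]
    congr 1
    omega
  · refine ⟨(sp hn i.val (j.val - i.val))⁻¹, extendsTo_sp_inv hn i j (le_of_lt hlt), ?_⟩
    rw [Equiv.Perm.sign_inv, sp_sign hn (by have := j.isLt; omega)]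
    congr 1
    omega

lemma opBij_mem_AM (hn : 0 < n) {i j : Fin n} (hpar : (i.val + j.val) % 2 = 0) :
    opBij i j ∈ AM n := by
  refine ⟨Or.inl (orderPres_opBij i j), pInj_opBij i j, Or.inr ?_⟩
  rcases opBij_ext hn i j with ⟨σ, hext, hsign⟩
  refine ⟨σ, ?_, hext⟩
  rw [Equiv.Perm.mem_alternatingGroup, hsign]
  apply Even.neg_one_pow
  have h1 : (i.val - j.val + (j.val - i.val)) % 2 = 0 := by omega
  exact Nat.even_iff.2 h1

lemma pidOn_mem_AM (A : Finset (Fin n)) : pidOn A ∈ AM n := by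
  refine ⟨Or.inl (orderPres_pidOn A), pInj_pidOn A, Or.inr ⟨1, one_mem _, ?_⟩⟩
  intro x a ha
  rw [(pidOn_eq_some.1 ha).2]
  rfl

end Perms
section RevPerm
open Equiv
variable {n : ℕ}

/-- the reversal permutation -/
def revp (n : ℕ) : Equiv.Perm (Fin n) :=
  ⟨Fin.rev, Fin.rev, Fin.rev_rev, Fin.rev_rev⟩

lemma revp_apply (x : Fin n) : revp n x = x.rev := rfl

/-- list of swaps realizing reversal, starting from level k -/
def revList (hn : 0 < n) (k : ℕ) : List (Equiv.Perm (Fin n)) :=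
  (List.range (n / 2 - k)).map (fun t => Equiv.swap (fm hn (k + t)) (fm hn (n - 1 - (k + t))))

lemma revList_val (hn : 0 < n) : ∀ m k, m = n / 2 - k → k ≤ n / 2 → ∀ x : Fin n,
    ((revList hn k).prod x).val =
      if k ≤ x.val ∧ x.val < n - k then n - 1 - x.val else x.val := by
  intro m
  induction m with
  | zero =>
    intro k hm hk x
    have hke : n / 2 ≤ k := by omega
    have : revList (n := n) hn k = [] := by
      unfold revList
      rw [show n / 2 - k = 0 by omega]
      rfl
    rw [this, List.prod_nil]
    show x.val = _
    have := x.isLt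
    split_ifs <;> omega
  | succ m ih =>
    intro k hm hk x
    have hkn : k < n / 2 := by omega
    have hcons : revList (n := n) hn k =
        Equiv.swap (fm hn k) (fm hn (n - 1 - k)) :: revList hn (k + 1) := by
      unfold revList
      rw [show n / 2 - k = (n / 2 - (k+1)) + 1 by omega, List.range_succ_eq_map,
        List.map_cons, List.map_map]
      congr 1
      apply List.map_congr_left
      intro t _
      simp only [Function.comp]
      congr 2 <;> omega
    rw [hcons, List.prod_cons, Equiv.Perm.mul_apply, swap_val,
      fm_val hn (by omega), fm_val hn (by omega),
      ih (k + 1) (by omega) (by omega) x]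
    have := x.isLt
    split_ifs <;> omega

lemma revp_sign (hn : 0 < n) (h4 : n % 4 = 0) :
    Equiv.Perm.sign (revp n) = 1 := by
  have hrev : revp n = (revList hn 0).prod := by
    apply Equiv.ext
    intro x
    apply Fin.ext
    rw [revList_val hn (n / 2) 0 (by omega) (by omega) x, revp_apply, rev_val]
    have := x.isLt
    split_ifs <;> omega
  have hlen : (revList (n := n) hn 0).length = n / 2 := by
    unfold revList; simp
  have hs : ∀ g ∈ revList (n := n) hn 0, g.IsSwap := by
    intro g hg
    unfold revList at hg
    rcases List.mem_map.1 hg with ⟨t, ht, rfl⟩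
    rw [List.mem_range] at ht
    refine ⟨_, _, ?_, rfl⟩
    intro he
    have := congrArg Fin.val he
    rw [fm_val hn (by omega), fm_val hn (by omega)] at this
    omega
  rw [hrev]
  have := Equiv.Perm.sign_prod_list_swap hs
  rw [hlen] at this
  rw [this]
  apply Even.neg_one_pow
  exact Nat.even_iff.2 (by omega)

lemma revp_mem_alternating (hn : 0 < n) (h4 : n % 4 = 0) :
    revp n ∈ alternatingGroup (Fin n) :=
  Equiv.Perm.mem_alternatingGroup.2 (revp_sign hn h4)

lemma hPT_mem_AM (hn : 0 < n) (h4 : n % 4 = 0) : hPT n ∈ AM n := by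
  refine ⟨Or.inr orderRev_hPT, pInj_hPT, Or.inr ⟨revp n, revp_mem_alternating hn h4, ?_⟩⟩
  intro x a ha
  rw [hPT_apply, Option.some.injEq] at ha
  rw [revp_apply, ha]

/-- AM is closed under multiplication -/
lemma AM_mul {f g : PT n} (hn : 4 ≤ n) (hf : f ∈ AM n) (hg : g ∈ AM n) :
    f * g ∈ AM n := by
  obtain ⟨hfm, hfi, hfa⟩ := hf
  obtain ⟨hgm, hgi, hga⟩ := hg
  refine ⟨isMonotonePT_mul hfm hgm, pInj_mul hfi hgi, ?_⟩
  by_cases hr : prank (f * g) + 2 ≤ n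
  · exact Or.inl hr
  · right
    have hrf : prank f + 2 > n := by
      have := prank_mul_le_left f g
      omega
    have hrg : prank g + 2 > n := by
      have := prank_mul_le_right g hfi (by omega)
      omega
    have hfa' : ∃ σ, σ ∈ alternatingGroup (Fin n) ∧ extendsTo σ f := by
      rcases hfa with h | h
      · omega
      · exact h
    have hga' : ∃ σ, σ ∈ alternatingGroup (Fin n) ∧ extendsTo σ g := by
      rcases hga with h | h
      · omega
      · exact h
    rcases hfa' with ⟨σ, hσ, hσe⟩
    rcases hga' with ⟨τ, hτ, hτe⟩
    refine ⟨τ * σ, mul_mem hτ hσ, ?_⟩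
    intro x a ha
    rcases pmul_eq_some.1 ha with ⟨m, hm1, hm2⟩
    rw [Equiv.Perm.mul_apply, hσe x m hm1, hτe m a hm2]

lemma AM_one : (1 : PT n) ∈ AM n := by
  have := pidOn_mem_AM (Finset.univ : Finset (Fin n))
  rwa [pidOn_univ] at this

/-- AM as a submonoid -/
def AMsub (n : ℕ) (hn : 4 ≤ n) : Submonoid (PT n) where
  carrier := AM n
  mul_mem' := AM_mul hn
  one_mem' := AM_one

end RevPerm
section Gens
variable {n : ℕ}

lemma opBij_congr {i j i' j' : Fin n} (h1 : i = i') (h2 : j = j') :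
    opBij i j = opBij i' j' := by rw [h1, h2]

lemma xg_eq (hn : 2 ≤ n) {i : ℕ} (h3 : 3 ≤ i) (hi : i ≤ n) :
    xg n hn i = opBij ⟨i - 1, by omega⟩ ⟨i - 3, by omega⟩ := by
  unfold xg
  rw [dif_pos ⟨h3, hi⟩]

lemma descChain_eq (hn : 2 ≤ n) : ∀ m b, 3 ≤ b → 1 ≤ m → (hbd : b + 2 * m ≤ n + 2) →
    descChain n hn b m = opBij ⟨b + 2 * m - 3, by omega⟩ ⟨b - 3, by omega⟩ := by
  intro m
  induction m with
  | zero => intro b _ h1 _; omega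
  | succ m ih =>
    intro b hb _ hbound
    by_cases hm : m = 0
    · subst hm
      have h0 : descChain n hn b 1 = xg n hn b := by
        unfold descChain
        rw [show List.range 1 = [0] from rfl]
        simp
      rw [h0, xg_eq hn (by omega) (by omega)]
      exact opBij_congr (Fin.ext (by simp only [Fin.val_mk]; try omega)) rfl
    · have hstep : descChain n hn b (m + 1) = xg n hn (b + 2 * m) * descChain n hn b m := by
        unfold descChain
        rw [List.range_succ, List.map_append, List.reverse_append]
        simp [List.prod_cons]
      rw [hstep, ih b hb (by omega) (by omega), xg_eq hn (by omega) (by omega)]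
      rw [opBij_congr (i' := (⟨b + 2*m - 1, by omega⟩ : Fin n)) (j' := ⟨b + 2*m - 3, by omega⟩)
        (Fin.ext (by simp only [Fin.val_mk]; try omega)) (Fin.ext (by simp only [Fin.val_mk]))]
      rw [opBij_comp]
      exact opBij_congr (Fin.ext (by simp only [Fin.val_mk]; omega)) rfl

/-- the closure submonoid -/
def clo (n : ℕ) (hn : 2 ≤ n) : Submonoid (PT n) := Submonoid.closure (AMgens0 n hn)

variable (hn : 2 ≤ n)

lemma mem_clo_congr {i j i' j' : Fin n} (h1 : i.val = i'.val) (h2 : j.val = j'.val)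
    (h : opBij i j ∈ clo n hn) : opBij i' j' ∈ clo n hn := by
  rwa [opBij_congr (Fin.ext h1) (Fin.ext h2)] at h

lemma hPT_mem_clo : hPT n ∈ clo n hn :=
  Submonoid.subset_closure (Or.inl rfl)

lemma xg_mem_clo {i : ℕ} (h1 : n / 2 + 3 ≤ i) (h2 : i ≤ n) : xg n hn i ∈ clo n hn :=
  Submonoid.subset_closure (Or.inr (Or.inl ⟨i, h1, h2, rfl⟩))

lemma chain4_mem_clo (h4 : n % 4 = 0) (hn4 : 4 ≤ n) :
    opBij (⟨n/2+1, by omega⟩ : Fin n) ⟨1, by omega⟩ ∈ clo n hn := by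
  have h : descChain n hn 4 (n/4) ∈ clo n hn :=
    Submonoid.subset_closure (Or.inr (Or.inr (Or.inl rfl)))
  rw [descChain_eq hn (n/4) 4 (by omega) (by omega) (by omega)] at h
  exact mem_clo_congr hn (by simp only [Fin.val_mk]; omega) (by simp only [Fin.val_mk]) h

lemma chain3_mem_clo (h4 : n % 4 = 0) (hn4 : 4 ≤ n) :
    opBij (⟨n/2, by omega⟩ : Fin n) ⟨0, by omega⟩ ∈ clo n hn := by
  have h : descChain n hn 3 (n/4) ∈ clo n hn :=
    Submonoid.subset_closure (Or.inr (Or.inr (Or.inr rfl)))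
  rw [descChain_eq hn (n/4) 3 (by omega) (by omega) (by omega)] at h
  exact mem_clo_congr hn (by simp only [Fin.val_mk]; omega) (by simp only [Fin.val_mk]) h

lemma conj_mem_clo {i j : Fin n} (h : opBij i j ∈ clo n hn) :
    opBij i.rev j.rev ∈ clo n hn := by
  rw [← hPT_conj_opBij]
  exact mul_mem (mul_mem (hPT_mem_clo hn) h) (hPT_mem_clo hn)

/-- next vertex in the generation cycle -/
def nxt (n v : ℕ) : ℕ :=
  if v + 2 < n / 2 then v + 2
  else if v = n / 2 - 2 then n - 2
  else if v = n / 2 - 1 then n - 1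
  else if n / 2 + 2 ≤ v then v - 2
  else if v = n / 2 then 0 else 1

lemma nxt_lt (h4 : n % 4 = 0) (hn4 : 4 ≤ n) {v : ℕ} (hv : v < n) : nxt n v < n := by
  unfold nxt; split_ifs <;> omega

lemma nxt_parity (h4 : n % 4 = 0) (hn4 : 4 ≤ n) {v : ℕ} (hv : v < n) :
    nxt n v % 2 = v % 2 := by
  unfold nxt; split_ifs <;> omega

lemma step_mem (h4 : n % 4 = 0) (hn4 : 4 ≤ n) {v : ℕ} (hv : v < n) :
    opBij (⟨v, hv⟩ : Fin n) ⟨nxt n v, nxt_lt h4 hn4 hv⟩ ∈ clo n hn := by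
  have hrv : ∀ (a : ℕ) (ha : a < n), ((⟨a, ha⟩ : Fin n).rev).val = n - 1 - a := by
    intro a ha
    rw [rev_val]
  by_cases c1 : v + 2 < n / 2
  · have hx := xg_mem_clo hn (i := n - v) (by omega) (by omega)
    rw [xg_eq hn (by omega) (by omega)] at hx
    have hc := conj_mem_clo hn hx
    apply mem_clo_congr hn (i := (⟨n - v - 1, by omega⟩ : Fin n).rev)
      (j := (⟨n - v - 3, by omega⟩ : Fin n).rev) ?_ ?_ hc
    · rw [hrv]; simp only [Fin.val_mk]; omega
    · rw [hrv]; simp only [Fin.val_mk]; unfold nxt; split_ifs <;> omega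
  · by_cases c2 : v = n / 2 - 2
    · have hc := conj_mem_clo hn (chain4_mem_clo hn h4 hn4)
      apply mem_clo_congr hn ?_ ?_ hc
      · rw [hrv]; simp only [Fin.val_mk]; omega
      · rw [hrv]; simp only [Fin.val_mk]; unfold nxt; split_ifs <;> omega
    · by_cases c3 : v = n / 2 - 1
      · have hc := conj_mem_clo hn (chain3_mem_clo hn h4 hn4)
        apply mem_clo_congr hn ?_ ?_ hc
        · rw [hrv]; simp only [Fin.val_mk]; omega
        · rw [hrv]; simp only [Fin.val_mk]; unfold nxt; split_ifs <;> omega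
      · by_cases c4 : n / 2 + 2 ≤ v
        · have hx := xg_mem_clo hn (i := v + 1) (by omega) (by omega)
          rw [xg_eq hn (by omega) (by omega)] at hx
          apply mem_clo_congr hn ?_ ?_ hx
          · simp only [Fin.val_mk]; omega
          · simp only [Fin.val_mk]; unfold nxt; split_ifs <;> omega
        · by_cases c5 : v = n / 2
          · apply mem_clo_congr hn ?_ ?_ (chain3_mem_clo hn h4 hn4)
            · simp only [Fin.val_mk]; omega
            · simp only [Fin.val_mk]; unfold nxt; split_ifs <;> omega
          · apply mem_clo_congr hn ?_ ?_ (chain4_mem_clo hn h4 hn4)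
            · simp only [Fin.val_mk]; omega
            · simp only [Fin.val_mk]; unfold nxt; split_ifs <;> omega

lemma iter_lt (h4 : n % 4 = 0) (hn4 : 4 ≤ n) {v : ℕ} (hv : v < n) (m : ℕ) :
    (nxt n)^[m] v < n := by
  induction m generalizing v with
  | zero => exact hv
  | succ m ih =>
    rw [Function.iterate_succ_apply]
    exact ih (nxt_lt h4 hn4 hv)

lemma iter_mem (h4 : n % 4 = 0) (hn4 : 4 ≤ n) : ∀ m, 1 ≤ m → ∀ v, (hv : v < n) →
    opBij (⟨v, hv⟩ : Fin n) ⟨(nxt n)^[m] v, iter_lt h4 hn4 hv m⟩ ∈ clo n hn := by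
  intro m
  induction m with
  | zero => omega
  | succ m ih =>
    intro _ v hv
    by_cases hm : m = 0
    · subst hm
      apply mem_clo_congr hn rfl ?_ (step_mem hn h4 hn4 hv)
      simp only [Fin.val_mk]
      rw [Function.iterate_one]
    · have h1 := step_mem hn h4 hn4 hv
      have h2 := ih (by omega) (nxt n v) (nxt_lt h4 hn4 hv)
      have hmul := mul_mem h1 h2
      rw [opBij_comp] at hmul
      apply mem_clo_congr hn rfl ?_ hmul
      simp only [Fin.val_mk]
      rw [Function.iterate_succ_apply]

/-- cyclic position of a vertex -/
def posf (n v : ℕ) : ℕ := if v < n / 2 then v / 2 else n / 4 + (n - 1 - v) / 2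

lemma posf_lt (h4 : n % 4 = 0) (hn4 : 4 ≤ n) {v : ℕ} (hv : v < n) : posf n v < n / 2 := by
  unfold posf; split_ifs <;> omega

lemma posf_inj (h4 : n % 4 = 0) (hn4 : 4 ≤ n) {v w : ℕ} (hv : v < n) (hw : w < n)
    (hp : v % 2 = w % 2) (he : posf n v = posf n w) : v = w := by
  unfold posf at he; split_ifs at he <;> omega

lemma posf_nxt (h4 : n % 4 = 0) (hn4 : 4 ≤ n) {v : ℕ} (hv : v < n) :
    posf n (nxt n v) = posf n v + 1 ∨
      (posf n v = n / 2 - 1 ∧ posf n (nxt n v) = 0) := by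
  unfold nxt posf; split_ifs <;> omega

lemma iter_pos (h4 : n % 4 = 0) (hn4 : 4 ≤ n) : ∀ m {v : ℕ}, v < n → m ≤ n / 2 →
    ((nxt n)^[m] v) % 2 = v % 2 ∧
      (posf n ((nxt n)^[m] v) = posf n v + m ∨
       posf n ((nxt n)^[m] v) + n / 2 = posf n v + m) := by
  intro m
  induction m with
  | zero =>
    intro v hv _
    rw [Function.iterate_zero_apply]
    exact ⟨rfl, Or.inl (by omega)⟩
  | succ m ih =>
    intro v hv hm
    have hw : (nxt n)^[m] v < n := iter_lt h4 hn4 hv m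
    obtain ⟨hpar, hpos⟩ := ih hv (by omega)
    rw [Function.iterate_succ_apply']
    constructor
    · rw [nxt_parity h4 hn4 hw, hpar]
    · have hnx := posf_nxt h4 hn4 hw
      have hlt1 := posf_lt h4 hn4 hv
      have hlt2 := posf_lt h4 hn4 hw
      have hlt3 := posf_lt h4 hn4 (nxt_lt h4 hn4 hw)
      rcases hnx with h1 | ⟨h1, h2⟩ <;> rcases hpos with h3 | h3 <;> omega

lemma reach (h4 : n % 4 = 0) (hn4 : 4 ≤ n) {a b : ℕ} (ha : a < n) (hb : b < n)
    (hp : a % 2 = b % 2) : ∃ m, 1 ≤ m ∧ (nxt n)^[m] a = b := by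
  have hlt1 := posf_lt h4 hn4 ha
  have hlt2 := posf_lt h4 hn4 hb
  rcases lt_or_ge (posf n a) (posf n b) with hcase | hcase
  · refine ⟨posf n b - posf n a, by omega, ?_⟩
    obtain ⟨hpar, hpos⟩ := iter_pos h4 hn4 (posf n b - posf n a) ha (by omega)
    have hlt3 := posf_lt h4 hn4 (iter_lt h4 hn4 ha (posf n b - posf n a))
    exact posf_inj h4 hn4 (iter_lt h4 hn4 ha _) hb (by omega) (by omega)
  · refine ⟨posf n b + n / 2 - posf n a, by omega, ?_⟩
    obtain ⟨hpar, hpos⟩ := iter_pos h4 hn4 (posf n b + n / 2 - posf n a) ha (by omega)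
    have hlt3 := posf_lt h4 hn4 (iter_lt h4 hn4 ha (posf n b + n / 2 - posf n a))
    exact posf_inj h4 hn4 (iter_lt h4 hn4 ha _) hb (by omega) (by omega)

/-- all same-parity opBij are in the closure -/
lemma opBij_mem_clo (h4 : n % 4 = 0) (hn4 : 4 ≤ n) {i j : Fin n}
    (hpar : (i.val + j.val) % 2 = 0) : opBij i j ∈ clo n hn := by
  rcases reach h4 hn4 i.isLt j.isLt (by omega) with ⟨m, hm1, hmv⟩
  apply mem_clo_congr hn (i := ⟨i.val, i.isLt⟩)
    (j := ⟨(nxt n)^[m] i.val, iter_lt h4 hn4 i.isLt m⟩) rfl ?_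
    (iter_mem hn h4 hn4 m hm1 i.val i.isLt)
  simp only [Fin.val_mk]
  rw [hmv]

lemma opBij_self_eq_pidOn (i : Fin n) : opBij i i = pidOn (Finset.univ.erase i) := by
  funext x
  by_cases hx : x = i
  · subst hx
    rw [opBij_none]
    unfold pidOn
    rw [if_neg (by simp)]
  · rw [opBij_apply, if_neg hx]
    unfold pidOn
    rw [if_pos (Finset.mem_erase.2 ⟨hx, Finset.mem_univ x⟩)]
    congr 1
    apply Fin.ext
    show obf i.val i.val x.val = x.val
    have : x.val ≠ i.val := fun hh => hx (Fin.ext hh)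
    unfold obf; split_ifs <;> omega

lemma pidOn_erase_mem_clo (h4 : n % 4 = 0) (hn4 : 4 ≤ n) (i : Fin n) :
    pidOn (Finset.univ.erase i) ∈ clo n hn := by
  rw [← opBij_self_eq_pidOn]
  exact opBij_mem_clo hn h4 hn4 (by omega)

lemma pidOn_mem_clo (h4 : n % 4 = 0) (hn4 : 4 ≤ n) (A : Finset (Fin n)) :
    pidOn A ∈ clo n hn := by
  generalize hc : (Finset.univ \ A).card = c
  induction c generalizing A with
  | zero =>
    have hsub : Finset.univ ⊆ A := by
      rw [← Finset.sdiff_eq_empty_iff_subset]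
      exact Finset.card_eq_zero.1 hc
    rw [Finset.univ_subset_iff.1 hsub, pidOn_univ]
    exact one_mem _
  | succ c ih =>
    have hpos : 0 < (Finset.univ \ A).card := by omega
    rcases Finset.card_pos.1 hpos with ⟨a, ha⟩
    rw [Finset.mem_sdiff] at ha
    have hins : (Finset.univ \ insert a A).card = c := by
      rw [Finset.sdiff_insert, Finset.card_erase_of_mem (Finset.mem_sdiff.2 ha), hc]
      omega
    have h1 := ih (insert a A) hins
    have h2 := pidOn_erase_mem_clo hn h4 hn4 a
    have hmul := mul_mem h1 h2
    rwa [pidOn_mul, show insert a A ∩ Finset.univ.erase a = A from by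
      ext x
      simp only [Finset.mem_inter, Finset.mem_insert, Finset.mem_erase, Finset.mem_univ,
        and_true]
      constructor
      · rintro ⟨h3 | h3, h4'⟩
        · exact absurd h3 h4'
        · exact h3
      · intro h3
        refine ⟨Or.inr h3, ?_⟩
        intro he
        rw [he] at h3
        exact ha.2 h3] at hmul

end Gens
section Uniq
variable {n : ℕ}

lemma card_below {f : PT n} (hp : orderPres f) (hi : pInj f) (hn0 : 0 < n)
    {x a : Fin n} (hfx : f x = some a) :
    (pIm f ∩ Finset.Iic a).card = (pDom f ∩ Finset.Iic x).card := by
  have himg : pIm f ∩ Finset.Iic a = (pDom f ∩ Finset.Iic x).image (fh f hn0) := by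
    ext b
    rw [Finset.mem_inter, Finset.mem_image]
    constructor
    · rintro ⟨hb, hba⟩
      rcases mem_pIm.1 hb with ⟨y, hy⟩
      have hba' : b ≤ a := Finset.mem_Iic.1 hba
      have hyx : y ≤ x := by
        rcases le_or_gt y x with h | h
        · exact h
        · have hab : a ≤ b := hp x y a b hfx hy (le_of_lt h)
          have : a = b := le_antisymm hab hba'
          subst this
          have := hi y x a hy hfx
          omega
      exact ⟨y, Finset.mem_inter.2 ⟨mem_pDom.2 ⟨b, hy⟩, Finset.mem_Iic.2 hyx⟩,
        by simp [fh, hy]⟩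
    · rintro ⟨y, hy, hfy⟩
      rcases Finset.mem_inter.1 hy with ⟨hy1, hy2⟩
      rcases mem_pDom.1 hy1 with ⟨c, hc⟩
      simp [fh, hc] at hfy
      subst hfy
      refine ⟨mem_pIm.2 ⟨y, hc⟩, Finset.mem_Iic.2 ?_⟩
      exact hp y x c a hc hfx (Finset.mem_Iic.1 hy2)
  rw [himg]
  apply Finset.card_image_of_injOn
  intro u hu v hv huv
  rcases mem_pDom.1 (Finset.mem_inter.1 (by exact_mod_cast hu)).1 with ⟨c, hc⟩
  rcases mem_pDom.1 (Finset.mem_inter.1 (by exact_mod_cast hv)).1 with ⟨c', hc'⟩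
  simp [fh, hc, hc'] at huv
  subst huv
  exact hi u v c hc hc'

/-- uniqueness of order-preserving injections with given domain and image -/
lemma orderIso_unique {f g : PT n} (hn0 : 0 < n)
    (hpf : orderPres f) (hif : pInj f) (hpg : orderPres g) (hig : pInj g)
    (hd : pDom f = pDom g) (hm : pIm f = pIm g) : f = g := by
  funext x
  by_cases hx : x ∈ pDom f
  · rcases mem_pDom.1 hx with ⟨a, ha⟩
    have hx' : x ∈ pDom g := hd ▸ hx
    rcases mem_pDom.1 hx' with ⟨b, hb⟩
    have h1 := card_below hpf hif hn0 ha
    have h2 := card_below hpg hig hn0 hb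
    rw [hd] at h1
    rw [← h2] at h1
    rw [hm] at h1
    -- h1 : (pIm g ∩ Iic a).card = (pIm g ∩ Iic b).card
    have hab : a = b := by
      by_contra hne
      rcases Ne.lt_or_gt hne with hlt | hlt
      · have hsub : pIm g ∩ Finset.Iic a ⊂ pIm g ∩ Finset.Iic b := by
          apply Finset.ssubset_iff_of_subset (Finset.inter_subset_inter
            (Finset.Subset.refl _) (Finset.Iic_subset_Iic.2 (le_of_lt hlt))) |>.2
          refine ⟨b, Finset.mem_inter.2 ⟨?_, Finset.mem_Iic.2 le_rfl⟩, ?_⟩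
          · exact mem_pIm.2 ⟨x, hb⟩
          · intro hmem
            have := Finset.mem_Iic.1 (Finset.mem_inter.1 hmem).2
            omega
        have := Finset.card_lt_card hsub
        omega
      · have hsub : pIm g ∩ Finset.Iic b ⊂ pIm g ∩ Finset.Iic a := by
          apply Finset.ssubset_iff_of_subset (Finset.inter_subset_inter
            (Finset.Subset.refl _) (Finset.Iic_subset_Iic.2 (le_of_lt hlt))) |>.2
          refine ⟨a, Finset.mem_inter.2 ⟨?_, Finset.mem_Iic.2 le_rfl⟩, ?_⟩
          · rw [← hm]; exact mem_pIm.2 ⟨x, ha⟩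
          · intro hmem
            have := Finset.mem_Iic.1 (Finset.mem_inter.1 hmem).2
            omega
        have := Finset.card_lt_card hsub
        omega
    rw [ha, hb, hab]
  · have hx' : x ∉ pDom g := hd ▸ hx
    have h1 : f x = none := by
      cases hfx : f x with
      | none => rfl
      | some a => exact absurd (mem_pDom.2 ⟨a, hfx⟩) hx
    have h2 : g x = none := by
      cases hgx : g x with
      | none => rfl
      | some a => exact absurd (mem_pDom.2 ⟨a, hgx⟩) hx'
    rw [h1, h2]

lemma eq_pid_of_rank_n {f : PT n} (hpf : orderPres f) (hif : pInj f)
    (hr : prank f = n) (hn0 : 0 < n) : f = 1 := by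
  have hd : pDom f = Finset.univ := by
    apply Finset.eq_univ_of_card
    rw [show (pDom f).card = prank f from rfl, hr, Fintype.card_fin]
  have hm : pIm f = Finset.univ := by
    apply Finset.eq_univ_of_card
    rw [prank_eq_im_card hif hn0, hr, Fintype.card_fin]
  have := orderIso_unique hn0 hpf hif (orderPres_pidOn Finset.univ) (pInj_pidOn _)
    (by rw [hd, pDom_pidOn]) (by rw [hm, pIm_pidOn])
  rw [this, pidOn_univ]

lemma compl_singleton {A : Finset (Fin n)} (hA : A.card = n - 1) (hn0 : 0 < n) :
    ∃ i, A = Finset.univ.erase i := by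
  have hcompl : (Finset.univ \ A).card = 1 := by
    rw [Finset.card_sdiff_of_subset (Finset.subset_univ _), Finset.card_univ, Fintype.card_fin, hA]
    omega
  rcases Finset.card_eq_one.1 hcompl with ⟨i, hi⟩
  refine ⟨i, ?_⟩
  have h1 : Finset.univ \ (Finset.univ \ A) = A := by
    rw [Finset.sdiff_sdiff_self_left]
    exact Finset.univ_inter A
  rw [← h1, hi, Finset.erase_eq]

lemma eq_opBij_of_rank {f : PT n} (hpf : orderPres f) (hif : pInj f)
    (hr : prank f = n - 1) (hn0 : 0 < n) :
    ∃ i j : Fin n, f = opBij i j := by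
  rcases compl_singleton (show (pDom f).card = n - 1 from hr) hn0 with ⟨i, hi⟩
  rcases compl_singleton (show (pIm f).card = n - 1 from by
    rw [prank_eq_im_card hif hn0, hr]) hn0 with ⟨j, hj⟩
  refine ⟨i, j, ?_⟩
  exact orderIso_unique hn0 hpf hif (orderPres_opBij i j) (pInj_opBij i j)
    (by rw [hi, pDom_opBij]) (by rw [hj, pIm_opBij])

lemma parity_of_AM {f : PT n} (hAM : f ∈ AM n) (hr : prank f = n - 1)
    {i j : Fin n} (hf : f = opBij i j) (hn1 : 1 ≤ n) : (i.val + j.val) % 2 = 0 := by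
  obtain ⟨-, -, hAI⟩ := hAM
  have hext : ∃ σ, σ ∈ alternatingGroup (Fin n) ∧ extendsTo σ f := by
    rcases hAI with h | h
    · omega
    · exact h
  rcases hext with ⟨σ, hσalt, hσ⟩
  rcases opBij_ext (show 0 < n by omega) i j with ⟨τ, hτe, hτs⟩
  have hττ : extendsTo τ f := by rw [hf]; exact hτe
  have := extendsTo_unique hr hn1 hσ hττ
  subst this
  rw [Equiv.Perm.mem_alternatingGroup, hτs] at hσalt
  rcases Nat.even_or_odd (i.val - j.val + (j.val - i.val)) with he | ho
  · rw [Nat.even_iff] at he; omega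
  · rw [Odd.neg_one_pow ho] at hσalt
    exact absurd hσalt (by decide)

end Uniq
section GenLow
variable {n : ℕ} (hn : 2 ≤ n)

/-- initial segment finset -/
def Ik (n k : ℕ) : Finset (Fin n) := Finset.univ.filter (fun x => x.val < k)

lemma Ik_card {k : ℕ} (hk : k ≤ n) : (Ik n k).card = k := by
  induction k with
  | zero =>
    rw [Finset.card_eq_zero]
    ext x
    simp [Ik]
  | succ k ih =>
    have hins : Ik n (k+1) = insert (⟨k, by omega⟩ : Fin n) (Ik n k) := by
      ext x
      simp only [Ik, Finset.mem_filter, Finset.mem_univ, true_and, Finset.mem_insert,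
        Fin.ext_iff, Fin.val_mk]
      omega
    rw [hins, Finset.card_insert_of_notMem (by simp [Ik]), ih (by omega)]

/-- existence of a legal move for a non-initial domain -/
lemma move_exists {A : Finset (Fin n)} (hcard : A.card + 2 ≤ n)
    (hA : A ≠ Ik n A.card) :
    ∃ j c : Fin n, j.val < c.val ∧ (j.val + c.val) % 2 = 0 ∧ j ∉ A ∧
      ∃ x ∈ A, j.val < x.val ∧ x.val ≤ c.val := by
  have hne : (Finset.univ \ A).Nonempty := by
    rw [← Finset.card_pos, Finset.card_sdiff_of_subset (Finset.subset_univ _), Finset.card_univ,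
      Fintype.card_fin]
    omega
  set jF := (Finset.univ \ A).min' hne with hjF
  have hjFnA : jF ∉ A := by
    have := Finset.min'_mem (Finset.univ \ A) hne
    rw [Finset.mem_sdiff] at this
    exact this.2
  have hjmin : ∀ y : Fin n, y ∉ A → jF ≤ y := by
    intro y hy
    exact Finset.min'_le _ _ (Finset.mem_sdiff.2 ⟨Finset.mem_univ y, hy⟩)
  have hbelow : ∀ y : Fin n, y.val < jF.val → y ∈ A := by
    intro y hy
    by_contra hyA
    have := hjmin y hyA
    have : jF.val ≤ y.val := this
    omega
  set T := A.filter (fun x => jF.val < x.val) with hT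
  have hTne : T.Nonempty := by
    by_contra hTe
    rw [Finset.not_nonempty_iff_eq_empty] at hTe
    apply hA
    have hAeq : A = Ik n jF.val := by
      ext x
      simp only [Ik, Finset.mem_filter, Finset.mem_univ, true_and]
      constructor
      · intro hx
        have hxT : x ∉ T := by rw [hTe]; exact Finset.notMem_empty x
        rw [hT, Finset.mem_filter] at hxT
        push_neg at hxT
        have h1 := hxT hx
        have h2 : x ≠ jF := fun he => hjFnA (he ▸ hx)
        have h3 : x.val ≠ jF.val := fun he => h2 (Fin.ext he)
        omega
      · intro hx
        exact hbelow x hx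
    have hAcard : A.card = jF.val := by
      rw [hAeq, Ik_card (le_of_lt jF.isLt)]
    rw [hAcard]
    exact hAeq
  set a := T.min' hTne with ha
  have haA : a ∈ A := (Finset.mem_filter.1 (Finset.min'_mem T hTne)).1
  have haj : jF.val < a.val := (Finset.mem_filter.1 (Finset.min'_mem T hTne)).2
  by_cases hpar : (jF.val + a.val) % 2 = 0
  · exact ⟨jF, a, haj, hpar, hjFnA, a, haA, haj, le_rfl⟩
  · by_cases htop : a.val + 1 < n
    · refine ⟨jF, ⟨a.val + 1, htop⟩, by simp only [Fin.val_mk]; omega,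
        by simp only [Fin.val_mk]; omega, hjFnA, a, haA, haj, by simp only [Fin.val_mk]; omega⟩
    · -- a = n - 1, parity mismatch
      have han : a.val = n - 1 := by have := a.isLt; omega
      have hgap : ∀ y : Fin n, jF.val < y.val → y.val < n - 1 → y ∉ A := by
        intro y h1 h2 hyA
        have hyT : y ∈ T := Finset.mem_filter.2 ⟨hyA, h1⟩
        have := Finset.min'_le T y hyT
        have : a.val ≤ y.val := this
        omega
      have hjtop : jF.val + 1 < n - 1 := by
        -- if jF = n - 2 then A ⊇ [0, n-3] ∪ {n-1} has ≥ n - 1 elements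
        by_contra hcon
        push_neg at hcon
        have hjn2 : jF.val = n - 2 := by omega
        have hsub : Ik n (n - 2) ∪ {a} ⊆ A := by
          intro y hy
          rcases Finset.mem_union.1 hy with hy1 | hy1
          · exact hbelow y (by
              have := (Finset.mem_filter.1 hy1).2
              omega)
          · rw [Finset.mem_singleton] at hy1
            exact hy1 ▸ haA
        have hcard2 : (Ik n (n - 2) ∪ {a}).card = n - 1 := by
          rw [Finset.card_union_of_disjoint (by
            rw [Finset.disjoint_singleton_right]
            simp only [Ik, Finset.mem_filter, Finset.mem_univ, true_and]
            omega)]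
          rw [Ik_card (by omega), Finset.card_singleton]
          omega
        have := Finset.card_le_card hsub
        omega
      rcases Nat.even_or_odd (n - 1) with hpn | hpn
      · -- n - 1 even: need j'' even
        rw [Nat.even_iff] at hpn
        by_cases hjp : jF.val % 2 = n % 2
        · -- jF has parity of n, i.e. opposite of n-1... choose matching
          refine ⟨⟨jF.val + 1, by omega⟩, a, by simp only [Fin.val_mk]; omega,
            by simp only [Fin.val_mk]; omega, ?_, a, haA, by simp only [Fin.val_mk]; omega,
            le_rfl⟩
          exact hgap _ (by simp only [Fin.val_mk]; omega) (by simp only [Fin.val_mk]; omega)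
        · exact ⟨jF, a, haj, by omega, hjFnA, a, haA, haj, le_rfl⟩
      · rw [Nat.odd_iff] at hpn
        by_cases hjp : jF.val % 2 = 1
        · exact ⟨jF, a, haj, by omega, hjFnA, a, haA, haj, le_rfl⟩
        · refine ⟨⟨jF.val + 1, by omega⟩, a, by simp only [Fin.val_mk]; omega,
            by simp only [Fin.val_mk]; omega, ?_, a, haA, by simp only [Fin.val_mk]; omega,
            le_rfl⟩
          exact hgap _ (by simp only [Fin.val_mk]; omega) (by simp only [Fin.val_mk]; omega)

/-- one sorting step on the domain side -/
lemma move_step {g : PT n} (hpg : orderPres g) (hig : pInj g)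
    {j c : Fin n} (hjc : j.val < c.val) (hjA : j ∉ pDom g)
    (hx : ∃ x ∈ pDom g, j.val < x.val ∧ x.val ≤ c.val) :
    orderPres (opBij c j * g) ∧ pInj (opBij c j * g) ∧
      prank (opBij c j * g) = prank g ∧ pIm (opBij c j * g) = pIm g ∧
      (pDom (opBij c j * g)).sum (fun x => x.val) < (pDom g).sum (fun x => x.val) ∧
      g = pidOn (pDom g) * opBij j c * (opBij c j * g) ∧
      pinv g = pinv (opBij c j * g) * (opBij c j * pidOn (pDom g)) := by
  have hn0 : 0 < n := lt_of_le_of_lt (Nat.zero_le _) c.isLt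
  set g' := opBij c j * g with hg'
  have hpg' : orderPres g' := orderPres_mul (orderPres_opBij c j) hpg
  have hig' : pInj g' := pInj_mul (pInj_opBij c j) hig
  have hjval : ∀ y : Fin n, y ∈ pDom g → y.val ≠ j.val := by
    intro y hy he
    exact hjA ((Fin.ext he : y = j) ▸ hy)
  -- image equality
  have him : pIm g' = pIm g := by
    apply Finset.Subset.antisymm (pIm_mul_subset _ _)
    intro b hb
    rcases mem_pIm.1 hb with ⟨x, hxb⟩
    have hxA : x ∈ pDom g := mem_pDom.2 ⟨b, hxb⟩
    have hxj : x ≠ j := fun he => hjA (he ▸ hxA)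
    have hw : ∃ w, opBij j c x = some w := by
      rw [opBij_apply, if_neg hxj]
      exact ⟨_, rfl⟩
    rcases hw with ⟨w, hw⟩
    have hcw : opBij c j w = some x := by
      have : pinv (opBij c j) x = some w := by rw [pinv_opBij]; exact hw
      exact pinv_eq_some_of this
    exact mem_pIm.2 ⟨w, pmul_eq_some.2 ⟨x, hcw, hxb⟩⟩
  have hrank : prank g' = prank g := by
    rw [← prank_eq_im_card hig' hn0, ← prank_eq_im_card hig hn0, him]
  -- domain description
  have hdomsub : ∀ x : Fin n, x ∈ pDom g' →
      ∃ m ∈ pDom g, opBij c j x = some m := by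
    intro x hxd
    rcases mem_pDom.1 hxd with ⟨b, hb⟩
    rcases pmul_eq_some.1 hb with ⟨m, hm1, hm2⟩
    exact ⟨m, mem_pDom.2 ⟨b, hm2⟩, hm1⟩
  -- sum decreases
  have hsum : (pDom g').sum (fun x => x.val) < (pDom g).sum (fun x => x.val) := by
    classical
    set dfun : Fin n → Fin n := fun a =>
      if j.val < a.val ∧ a.val ≤ c.val then ⟨a.val - 1, by have := a.isLt; omega⟩ else a
      with hdfun
    have hform : pDom g' = (pDom g).image dfun := by
      ext x
      rw [Finset.mem_image]
      constructor
      · intro hxd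
        rcases hdomsub x hxd with ⟨m, hmA, hcj⟩
        rcases opBij_eq_some.1 hcj with ⟨hxc, hmv⟩
        have hxcv : x.val ≠ c.val := fun he => hxc (Fin.ext he)
        have hmj := hjval m hmA
        have hxl := x.isLt
        have hcl := c.isLt
        unfold obf at hmv
        refine ⟨m, hmA, ?_⟩
        simp only [hdfun]
        split_ifs with hcase <;> apply Fin.ext <;> (try simp only [Fin.val_mk]) <;>
          split_ifs at hmv <;> omega
      · rintro ⟨a, haA, rfl⟩
        have haj := hjval a haA
        rcases mem_pDom.1 haA with ⟨b, hab⟩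
        apply mem_pDom.2
        have hal := a.isLt
        have hcl := c.isLt
        have hjl := j.isLt
        refine ⟨b, pmul_eq_some.2 ⟨a, ?_, hab⟩⟩
        rw [opBij_eq_some]
        simp only [hdfun]
        constructor
        · split_ifs with hcase <;> intro he <;> have hv := congrArg Fin.val he <;>
            (try simp only [Fin.val_mk] at hv) <;> omega
        · split_ifs with hcase <;> (try simp only [Fin.val_mk]) <;> unfold obf <;>
            split_ifs <;> omega
    have hinj : ∀ x ∈ pDom g, ∀ y ∈ pDom g, dfun x = dfun y → x = y := by
      intro x hxA y hyA hxy
      have hxj := hjval x hxA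
      have hyj := hjval y hyA
      simp only [hdfun] at hxy
      have hxl := x.isLt
      have hyl := y.isLt
      apply Fin.ext
      split_ifs at hxy with h1 h2 h2 <;> have hv := congrArg Fin.val hxy <;>
        (try simp only [Fin.val_mk] at hv) <;> omega
    rw [hform, Finset.sum_image hinj]
    rcases hx with ⟨x0, hx0A, hx0j, hx0c⟩
    apply Finset.sum_lt_sum
    · intro a haA
      simp only [hdfun]
      split_ifs with hcase
      · simp only [Fin.val_mk]; omega
      · exact le_rfl
    · refine ⟨x0, hx0A, ?_⟩
      simp only [hdfun]
      rw [if_pos ⟨hx0j, hx0c⟩]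
      simp only [Fin.val_mk]
      omega
  -- factorization
  have hfact : g = pidOn (pDom g) * opBij j c * g' := by
    rw [hg', ← mul_assoc, mul_assoc (pidOn (pDom g)), opBij_comp, opBij_self_eq_pidOn,
      pidOn_mul]
    have hAinter : pDom g ∩ Finset.univ.erase j = pDom g := by
      apply Finset.inter_eq_left.2
      intro y hy
      exact Finset.mem_erase.2 ⟨fun he => hjA (he ▸ hy), Finset.mem_univ y⟩
    rw [hAinter, pidOn_mul_eq_self (Finset.Subset.refl _)]
  have hpinv : pinv g = pinv g' * (opBij c j * pidOn (pDom g)) := by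
    conv_lhs => rw [hfact]
    rw [pinv_mul (pInj_mul (pInj_pidOn _) (pInj_opBij j c)) hig',
      pinv_mul (pInj_pidOn _) (pInj_opBij j c), pinv_opBij, pinv_pidOn]
  exact ⟨hpg', hig', hrank, him, hsum, hfact, hpinv⟩

end GenLow
section Main
variable {n : ℕ} (hn : 2 ≤ n)

lemma gen_low (h4 : n % 4 = 0) (hn4 : 4 ≤ n) :
    ∀ N (f : PT n), orderPres f → pInj f → prank f + 2 ≤ n →
    (pDom f).sum (fun x => x.val) + (pIm f).sum (fun x => x.val) ≤ N →
    f ∈ clo n hn ∧ pinv f ∈ clo n hn := by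
  intro N
  induction N with
  | zero =>
    intro f hpf hif hrf hm
    -- measure 0: both sums are 0... handle uniformly by the same argument as succ
    -- domain and image must be initial segments (possibly empty)
    have hdom : pDom f = Ik n (prank f) := by
      by_contra hA
      rcases move_exists (show (pDom f).card + 2 ≤ n from hrf) hA with ⟨j, c, hjc, hpar, hjA, x0, hx0A, hx0j, hx0c⟩
      obtain ⟨-, -, -, -, hsum, -, -⟩ := move_step hpf hif hjc hjA ⟨x0, hx0A, hx0j, hx0c⟩
      omega
    have him0 : (pIm f).card = prank f := prank_eq_im_card hif (by omega)
    have hIm : pIm f = Ik n (prank f) := by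
      by_contra hB
      have hBk : pIm f ≠ Ik n (pIm f).card := by rwa [him0]
      rcases move_exists (by omega) hBk with ⟨j, c, hjc, hpar, hjA, x0, hx0A, hx0j, hx0c⟩
      rw [← pDom_pinv hif] at hjA hx0A
      obtain ⟨-, -, -, -, hsum, -, -⟩ := move_step (orderPres_pinv hif hpf) (pInj_pinv f)
        hjc hjA ⟨x0, hx0A, hx0j, hx0c⟩
      rw [pDom_pinv hif] at hsum
      omega
    have hfeq : f = pidOn (Ik n (prank f)) :=
      orderIso_unique (by omega) hpf hif (orderPres_pidOn _) (pInj_pidOn _)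
        (by rw [hdom, pDom_pidOn]) (by rw [hIm, pIm_pidOn])
    constructor
    · rw [hfeq]; exact pidOn_mem_clo hn h4 hn4 _
    · rw [hfeq, pinv_pidOn]; exact pidOn_mem_clo hn h4 hn4 _
  | succ N ih =>
    intro f hpf hif hrf hm
    by_cases hA : pDom f = Ik n (prank f)
    · by_cases hB : pIm f = Ik n (prank f)
      · have hfeq : f = pidOn (Ik n (prank f)) :=
          orderIso_unique (by omega) hpf hif (orderPres_pidOn _) (pInj_pidOn _)
            (by rw [hA, pDom_pidOn]) (by rw [hB, pIm_pidOn])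
        constructor
        · rw [hfeq]; exact pidOn_mem_clo hn h4 hn4 _
        · rw [hfeq, pinv_pidOn]; exact pidOn_mem_clo hn h4 hn4 _
      · -- move on the image side, i.e. the domain of pinv f
        have him0 : (pIm f).card = prank f := prank_eq_im_card hif (by omega)
        have hBk : pIm f ≠ Ik n (pIm f).card := by rwa [him0]
        rcases move_exists (by omega) hBk with ⟨j, c, hjc, hpar, hjA, x0, hx0A, hx0j, hx0c⟩
        rw [← pDom_pinv hif] at hjA hx0A
        obtain ⟨hp', hi', hr', him', hsum, hfact, hpinv⟩ :=
          move_step (orderPres_pinv hif hpf) (pInj_pinv f) hjc hjA ⟨x0, hx0A, hx0j, hx0c⟩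
        set F' := opBij c j * pinv f with hF'
        have hrF : prank F' = prank f := by
          rw [hr']
          show (pDom (pinv f)).card = prank f
          rw [pDom_pinv hif, him0]
        have hmF : (pDom F').sum (fun x => x.val) + (pIm F').sum (fun x => x.val) ≤ N := by
          have h1 : pIm F' = pDom f := by rw [him', pIm_pinv hif]
          have h2 : (pDom F').sum (fun x => x.val) < (pIm f).sum (fun x => x.val) := by
            have := hsum
            rwa [pDom_pinv hif] at this
          rw [h1]
          omega
        obtain ⟨hF'clo, hF'invclo⟩ := ih F' hp' hi' (by omega) hmF
        have hjparity : (j.val + c.val) % 2 = 0 := hpar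
        have hopjc : opBij j c ∈ clo n hn := opBij_mem_clo hn h4 hn4 hjparity
        have hopcj : opBij c j ∈ clo n hn := opBij_mem_clo hn h4 hn4 (by omega)
        have hpB : pidOn (pDom (pinv f)) ∈ clo n hn := pidOn_mem_clo hn h4 hn4 _
        constructor
        · -- f = pinv (pinv f) = pinv F' * (opBij c j * pidOn B)
          have : f = pinv F' * (opBij c j * pidOn (pDom (pinv f))) := by
            conv_lhs => rw [← pinv_pinv hif, hpinv]
          rw [this]
          exact mul_mem hF'invclo (mul_mem hopcj hpB)
        · have : pinv f = pidOn (pDom (pinv f)) * opBij j c * F' := hfact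
          rw [this]
          exact mul_mem (mul_mem hpB hopjc) hF'clo
    · rcases move_exists (show (pDom f).card + 2 ≤ n from hrf) hA
        with ⟨j, c, hjc, hpar, hjA, x0, hx0A, hx0j, hx0c⟩
      obtain ⟨hp', hi', hr', him', hsum, hfact, hpinv⟩ :=
        move_step hpf hif hjc hjA ⟨x0, hx0A, hx0j, hx0c⟩
      set f' := opBij c j * f with hf'
      have hmF : (pDom f').sum (fun x => x.val) + (pIm f').sum (fun x => x.val) ≤ N := by
        rw [him']
        omega
      obtain ⟨hf'clo, hf'invclo⟩ := ih f' hp' hi' (by rw [hr']; exact hrf) hmF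
      have hopjc : opBij j c ∈ clo n hn := opBij_mem_clo hn h4 hn4 hpar
      have hopcj : opBij c j ∈ clo n hn := opBij_mem_clo hn h4 hn4 (by omega)
      have hpA : pidOn (pDom f) ∈ clo n hn := pidOn_mem_clo hn h4 hn4 _
      constructor
      · rw [hfact]
        exact mul_mem (mul_mem hpA hopjc) hf'clo
      · rw [hpinv]
        exact mul_mem hf'invclo (mul_mem hopcj hpA)

/-- order-preserving elements of AM lie in the closure -/
lemma op_mem_clo (h4 : n % 4 = 0) (hn4 : 4 ≤ n) {f : PT n}
    (hAM : f ∈ AM n) (hop : orderPres f) : f ∈ clo n hn := by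
  obtain ⟨hmono, hinj, hAI⟩ := hAM
  have hr : prank f ≤ n := by
    have : (pDom f).card ≤ Finset.univ.card := Finset.card_le_card (Finset.subset_univ _)
    rwa [Finset.card_univ, Fintype.card_fin] at this
  rcases Nat.lt_or_ge (prank f + 2) (n + 1) with hlow | hhigh
  · exact (gen_low hn h4 hn4 _ f hop hinj (by omega) le_rfl).1
  · -- prank f = n - 1 or n
    rcases Nat.lt_or_ge (prank f) n with hn1 | hn2
    · have hrn1 : prank f = n - 1 := by omega
      rcases eq_opBij_of_rank hop hinj hrn1 (by omega) with ⟨i, j, hfe⟩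
      have hpar := parity_of_AM ⟨hmono, hinj, hAI⟩ hrn1 hfe (by omega)
      rw [hfe]
      exact opBij_mem_clo hn h4 hn4 hpar
    · have : f = 1 := eq_pid_of_rank_n hop hinj (by omega) (by omega)
      rw [this]
      exact one_mem _

/-- all of AM lies in the closure -/
lemma AM_subset_clo (h4 : n % 4 = 0) (hn4 : 4 ≤ n) {f : PT n}
    (hAM : f ∈ AM n) : f ∈ clo n hn := by
  obtain ⟨hmono, hinj, hAI⟩ := hAM
  rcases hmono with hop | hrev
  · exact op_mem_clo hn h4 hn4 ⟨Or.inl hop, hinj, hAI⟩ hop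
  · -- f = hPT * (hPT * f), with hPT * f order-preserving
    set g := hPT n * f with hg
    have hgapp : ∀ x, g x = f x.rev := fun x => hPT_mul_apply f x
    have hgop : orderPres g := by
      intro x y a b hx hy hxy
      rw [hgapp] at hx hy
      apply hrev y.rev x.rev b a hy hx
      show (y.rev).val ≤ (x.rev).val
      rw [rev_val, rev_val]
      have : x.val ≤ y.val := hxy
      have := y.isLt
      omega
    have hginj : pInj g := pInj_mul pInj_hPT hinj
    have hgAI : pInj g ∧ (prank g + 2 ≤ n ∨
        ∃ σ : Equiv.Perm (Fin n), σ ∈ alternatingGroup (Fin n) ∧ extendsTo σ g) := by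
      refine ⟨hginj, ?_⟩
      have hrk : prank g = prank f := by
        show (pDom g).card = (pDom f).card
        rw [hg, pDom_hPT_mul]
        exact Finset.card_image_of_injective _ (fun x y h => by
          rw [← Fin.rev_rev x, h, Fin.rev_rev])
      rcases hAI with hl | ⟨σ, hσa, hσe⟩
      · left; omega
      · right
        refine ⟨σ * revp n, mul_mem hσa (revp_mem_alternating (by omega) h4), ?_⟩
        intro x a hxa
        rw [hgapp] at hxa
        have := hσe x.rev a hxa
        rw [Equiv.Perm.mul_apply]
        exact this
    have hfg : f = hPT n * g := by
      rw [hg, ← mul_assoc, hPT_mul_hPT, one_mul]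
    rw [hfg]
    exact mul_mem (hPT_mem_clo hn) (op_mem_clo hn h4 hn4 ⟨Or.inl hgop, hginj, hgAI.2⟩ hgop)

/-- the generators lie in AM -/
lemma AMgens0_subset_AM (h4 : n % 4 = 0) (hn4 : 4 ≤ n) :
    AMgens0 n hn ⊆ AM n := by
  intro f hf
  rcases hf with hf | ⟨i, hi1, hi2, hf⟩ | hf | hf
  · rw [hf]; exact hPT_mem_AM (by omega) h4
  · rw [hf, xg_eq hn (by omega) hi2]
    exact opBij_mem_AM (by omega) (by simp only [Fin.val_mk]; omega)
  · rw [hf, descChain_eq hn (n/4) 4 (by omega) (by omega) (by omega)]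
    exact opBij_mem_AM (by omega) (by simp only [Fin.val_mk]; omega)
  · rw [hf, descChain_eq hn (n/4) 3 (by omega) (by omega) (by omega)]
    exact opBij_mem_AM (by omega) (by simp only [Fin.val_mk]; omega)

/-- the closure equals AM -/
lemma clo_eq_AM (h4 : n % 4 = 0) (hn4 : 4 ≤ n) :
    (clo n hn : Set (PT n)) = AM n := by
  apply Set.Subset.antisymm
  · intro f hf
    have hle : clo n hn ≤ AMsub n hn4 := Submonoid.closure_le.2 (AMgens0_subset_AM hn h4 hn4)
    exact hle hf
  · intro f hf
    exact AM_subset_clo hn h4 hn4 hf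

end Main
section Ncard
variable {n : ℕ} (hn : 2 ≤ n)

/-- enumeration of the generating set -/
noncomputable def Fgen (n : ℕ) (hn : 2 ≤ n) : ℕ → PT n := fun i =>
  if i = n / 2 then hPT n
  else if i = n / 2 + 1 then descChain n hn 3 (n / 4)
  else if i = n / 2 + 2 then descChain n hn 4 (n / 4)
  else xg n hn i

lemma opBij_ne_hPT (h2 : 2 ≤ n) (i j : Fin n) : opBij i j ≠ hPT n := by
  intro he
  have h1 : opBij i j i = none := opBij_none i j
  rw [he] at h1
  exact Option.some_ne_none _ h1

lemma opBij_inj_left {i j i' j' : Fin n} (he : opBij i j = opBij i' j') : i = i' := by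
  by_contra hne
  have h1 : opBij i j i = none := opBij_none i j
  rw [he, opBij_apply, if_neg hne] at h1
  exact Option.some_ne_none _ h1

lemma Fgen_form (h4 : n % 4 = 0) (hn4 : 4 ≤ n) {i : ℕ} (h1 : n / 2 + 1 ≤ i) (h2 : i ≤ n) :
    ∃ j : Fin n, Fgen n hn i = opBij ⟨i - 1, by omega⟩ j := by
  unfold Fgen
  rw [if_neg (by omega)]
  by_cases hc3 : i = n / 2 + 1
  · rw [if_pos hc3, descChain_eq hn (n/4) 3 (by omega) (by omega) (by omega)]
    refine ⟨⟨3 - 3, by omega⟩, opBij_congr (Fin.ext ?_) rfl⟩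
    simp only [Fin.val_mk]
    omega
  · rw [if_neg hc3]
    by_cases hc4 : i = n / 2 + 2
    · rw [if_pos hc4, descChain_eq hn (n/4) 4 (by omega) (by omega) (by omega)]
      refine ⟨⟨4 - 3, by omega⟩, opBij_congr (Fin.ext ?_) rfl⟩
      simp only [Fin.val_mk]
      omega
    · rw [if_neg hc4, xg_eq hn (by omega) h2]
      exact ⟨⟨i - 3, by omega⟩, rfl⟩

lemma AMgens0_eq_image (h4 : n % 4 = 0) (hn4 : 4 ≤ n) :
    AMgens0 n hn = (Fgen n hn) '' (Set.Icc (n / 2) n) := by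
  ext f
  constructor
  · intro hf
    rcases hf with hf | ⟨i, hi1, hi2, hf⟩ | hf | hf
    · exact ⟨n / 2, Set.mem_Icc.2 ⟨le_rfl, by omega⟩, by rw [hf]; unfold Fgen; rw [if_pos rfl]⟩
    · refine ⟨i, Set.mem_Icc.2 ⟨by omega, hi2⟩, ?_⟩
      rw [hf]
      unfold Fgen
      rw [if_neg (by omega), if_neg (by omega), if_neg (by omega)]
    · refine ⟨n / 2 + 2, Set.mem_Icc.2 ⟨by omega, by omega⟩, ?_⟩
      rw [hf]
      unfold Fgen
      rw [if_neg (by omega), if_neg (by omega), if_pos rfl]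
    · refine ⟨n / 2 + 1, Set.mem_Icc.2 ⟨by omega, by omega⟩, ?_⟩
      rw [hf]
      unfold Fgen
      rw [if_neg (by omega), if_pos rfl]
  · rintro ⟨i, hi, rfl⟩
    rw [Set.mem_Icc] at hi
    by_cases h0 : i = n / 2
    · left; unfold Fgen; rw [if_pos h0]
    · by_cases h1 : i = n / 2 + 1
      · right; right; right
        unfold Fgen; rw [if_neg h0, if_pos h1]
      · by_cases h2 : i = n / 2 + 2
        · right; right; left
          unfold Fgen; rw [if_neg h0, if_neg h1, if_pos h2]
        · right; left
          refine ⟨i, by omega, hi.2, ?_⟩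
          unfold Fgen
          rw [if_neg h0, if_neg h1, if_neg h2]

lemma Fgen_injOn (h4 : n % 4 = 0) (hn4 : 4 ≤ n) :
    Set.InjOn (Fgen n hn) (Set.Icc (n / 2) n) := by
  intro i hi i' hi' he
  rw [Set.mem_Icc] at hi hi'
  by_cases h0 : i = n / 2
  · by_cases h0' : i' = n / 2
    · rw [h0, h0']
    · exfalso
      rcases Fgen_form hn h4 hn4 (i := i') (by omega) hi'.2 with ⟨j, hj⟩
      rw [h0] at he
      have hFh : Fgen n hn (n / 2) = hPT n := by unfold Fgen; rw [if_pos rfl]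
      rw [hFh, hj] at he
      exact opBij_ne_hPT hn _ _ he.symm
  · by_cases h0' : i' = n / 2
    · exfalso
      rcases Fgen_form hn h4 hn4 (i := i) (by omega) hi.2 with ⟨j, hj⟩
      rw [h0'] at he
      have hFh : Fgen n hn (n / 2) = hPT n := by unfold Fgen; rw [if_pos rfl]
      rw [hFh, hj] at he
      exact opBij_ne_hPT hn _ _ he
    · rcases Fgen_form hn h4 hn4 (i := i) (by omega) hi.2 with ⟨j, hj⟩
      rcases Fgen_form hn h4 hn4 (i := i') (by omega) hi'.2 with ⟨j', hj'⟩
      rw [hj, hj'] at he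
      have := opBij_inj_left he
      have hv := congrArg Fin.val this
      simp only [Fin.val_mk] at hv
      omega

lemma AMgens0_ncard (h4 : n % 4 = 0) (hn4 : 4 ≤ n) :
    (AMgens0 n hn).ncard = n / 2 + 1 := by
  rw [AMgens0_eq_image hn h4 hn4, Set.ncard_image_of_injOn (Fgen_injOn hn h4 hn4)]
  rw [← Finset.coe_Icc, Set.ncard_coe_finset, Nat.card_Icc]
  omega

end Ncard
section Minimal
variable {n : ℕ}

lemma pDom_one : pDom (1 : PT n) = Finset.univ := by
  ext x
  exact ⟨fun _ => Finset.mem_univ x, fun _ => mem_pDom.2 ⟨x, rfl⟩⟩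

lemma prank_one : prank (1 : PT n) = n := by
  rw [prank, pDom_one, Finset.card_univ, Fintype.card_fin]

lemma one_ne_hPT (hn : 2 ≤ n) : (1 : PT n) ≠ hPT n := by
  intro he
  have h1 : (1 : PT n) ⟨0, by omega⟩ = some ⟨0, by omega⟩ := rfl
  rw [he, hPT_apply] at h1
  have := congrArg Fin.val (Option.some.inj h1)
  rw [rev_val] at this
  simp only [Fin.val_mk] at this
  omega

/-- rank-n elements of AM are 1 or hPT -/
lemma rank_n_cases (hn : 2 ≤ n) {f : PT n} (hf : f ∈ AM n) (hr : prank f = n) :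
    f = 1 ∨ f = hPT n := by
  obtain ⟨hmono, hinj, -⟩ := hf
  rcases hmono with hop | hrev
  · left; exact eq_pid_of_rank_n hop hinj hr (by omega)
  · right
    set g := hPT n * f with hg
    have hgapp : ∀ x, g x = f x.rev := fun x => hPT_mul_apply f x
    have hgop : orderPres g := by
      intro x y a b hx hy hxy
      rw [hgapp] at hx hy
      apply hrev y.rev x.rev b a hy hx
      show (y.rev).val ≤ (x.rev).val
      rw [rev_val, rev_val]
      have : x.val ≤ y.val := hxy
      have := y.isLt
      omega
    have hginj : pInj g := pInj_mul pInj_hPT hinj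
    have hgrank : prank g = n := by
      show (pDom g).card = n
      rw [hg, pDom_hPT_mul,
        Finset.card_image_of_injective _ (fun x y h => by
          rw [← Fin.rev_rev x, h, Fin.rev_rev])]
      exact hr
    have hg1 : g = 1 := eq_pid_of_rank_n hgop hginj hgrank (by omega)
    have : f = hPT n * g := by rw [hg, ← mul_assoc, hPT_mul_hPT, one_mul]
    rw [this, hg1, mul_one]

lemma list_prod_pInj {l : List (PT n)} (h : ∀ g ∈ l, pInj g) : pInj l.prod := by
  induction l with
  | nil =>
    intro x y a hx hy
    have h1 : x = a := Option.some.inj hx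
    have h2 : y = a := Option.some.inj hy
    rw [h1, h2]
  | cons g t ih =>
    rw [List.prod_cons]
    exact pInj_mul (h g (List.mem_cons_self)) (ih (fun g' hg' => h g' (List.mem_cons_of_mem g hg')))

lemma list_prod_rank_top (hn : 2 ≤ n) {l : List (PT n)} (hAM : ∀ g ∈ l, g ∈ AM n)
    (hr : prank l.prod = n) : ∀ g ∈ l, prank g = n := by
  induction l with
  | nil => intro g hg; cases hg
  | cons g t ih =>
    rw [List.prod_cons] at hr
    have hgle : prank g ≤ n := by
      have : (pDom g).card ≤ Finset.univ.card := Finset.card_le_card (Finset.subset_univ _)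
      rwa [Finset.card_univ, Fintype.card_fin] at this
    have hg1 : n ≤ prank g := by
      have := prank_mul_le_left g t.prod
      omega
    have hginj : pInj g := (hAM g (List.mem_cons_self)).2.1
    have htle : prank t.prod ≤ n := by
      have : (pDom t.prod).card ≤ Finset.univ.card := Finset.card_le_card (Finset.subset_univ _)
      rwa [Finset.card_univ, Fintype.card_fin] at this
    have ht1 : n ≤ prank t.prod := by
      have := prank_mul_le_right (f := g) t.prod hginj (by omega)
      omega
    intro g' hg'
    rcases List.mem_cons.1 hg' with rfl | hg't
    · omega
    · exact ih (fun x hx => hAM x (List.mem_cons_of_mem g hx)) (by omega) g' hg't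

lemma list_prod_eq_one {l : List (PT n)} (h : ∀ g ∈ l, g = 1) : l.prod = 1 := by
  induction l with
  | nil => rfl
  | cons g t ih =>
    rw [List.prod_cons, h g (List.mem_cons_self), one_mul]
    exact ih (fun x hx => h x (List.mem_cons_of_mem g hx))

lemma image_rev_image_rev (A : Finset (Fin n)) : (A.image Fin.rev).image Fin.rev = A := by
  rw [Finset.image_image]
  have : (Fin.rev ∘ Fin.rev : Fin n → Fin n) = id := by
    funext x
    exact Fin.rev_rev x
  rw [this, Finset.image_id]

/-- key factor lemma: a rank n-1 product has a rank n-1 factor with the same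
or reversed domain -/
lemma rank_n1_factor (hn : 2 ≤ n) (h4 : n % 4 = 0) :
    ∀ l : List (PT n), (∀ g ∈ l, g ∈ AM n) → prank l.prod = n - 1 →
    ∃ g ∈ l, prank g = n - 1 ∧
      (pDom g = pDom l.prod ∨ pDom g = (pDom l.prod).image Fin.rev) := by
  intro l
  induction l with
  | nil =>
    intro _ hr
    rw [List.prod_nil, prank_one] at hr
    omega
  | cons g t ih =>
    intro hAM hr
    rw [List.prod_cons] at hr ⊢
    have hgAM := hAM g (List.mem_cons_self)
    have htAM : ∀ x ∈ t, x ∈ AM n := fun x hx => hAM x (List.mem_cons_of_mem g hx)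
    have hgle : prank g ≤ n := by
      have : (pDom g).card ≤ Finset.univ.card := Finset.card_le_card (Finset.subset_univ _)
      rwa [Finset.card_univ, Fintype.card_fin] at this
    have hg1 : n - 1 ≤ prank g := by
      have := prank_mul_le_left g t.prod
      omega
    rcases Nat.lt_or_ge (prank g) n with hlt | hge
    · -- prank g = n - 1
      have hrg : prank g = n - 1 := by omega
      refine ⟨g, List.mem_cons_self, hrg, Or.inl ?_⟩
      symm
      apply Finset.eq_of_subset_of_card_le (pDom_mul_subset g t.prod)
      show (pDom g).card ≤ (pDom (g * t.prod)).card
      have e1 : (pDom g).card = n - 1 := hrg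
      have e2 : (pDom (g * t.prod)).card = n - 1 := hr
      omega
    · have hrg : prank g = n := by omega
      rcases rank_n_cases hn hgAM hrg with rfl | rfl
      · rw [one_mul] at hr ⊢
        rcases ih htAM hr with ⟨g', hg't, hg'r, hg'd⟩
        exact ⟨g', List.mem_cons_of_mem _ hg't, hg'r, hg'd⟩
      · have hteq : t.prod = hPT n * (hPT n * t.prod) := by
          rw [← mul_assoc, hPT_mul_hPT, one_mul]
        have hrt : prank t.prod = n - 1 := by
          have hd : pDom t.prod = (pDom (hPT n * t.prod)).image Fin.rev := by
            rw [pDom_hPT_mul, image_rev_image_rev]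
          show (pDom t.prod).card = n - 1
          rw [hd, Finset.card_image_of_injective _ (fun x y h => by
            rw [← Fin.rev_rev x, h, Fin.rev_rev])]
          exact hr
        rcases ih htAM hrt with ⟨g', hg't, hg'r, hg'd⟩
        refine ⟨g', List.mem_cons_of_mem _ hg't, hg'r, ?_⟩
        have hdd : pDom t.prod = (pDom (hPT n * t.prod)).image Fin.rev := by
          rw [pDom_hPT_mul, image_rev_image_rev]
        rcases hg'd with h | h
        · right
          rw [h, hdd]
        · left
          rw [h, hdd, image_rev_image_rev]

lemma erase_inj {a b : Fin n} (h : Finset.univ.erase a = Finset.univ.erase b) : a = b := by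
  by_contra hne
  have : a ∈ Finset.univ.erase b := Finset.mem_erase.2 ⟨hne, Finset.mem_univ a⟩
  rw [← h] at this
  exact (Finset.mem_erase.1 this).1 rfl

lemma image_rev_erase (i : Fin n) :
    (Finset.univ.erase i).image Fin.rev = Finset.univ.erase i.rev := by
  ext x
  rw [Finset.mem_image]
  constructor
  · rintro ⟨y, hy, rfl⟩
    rcases Finset.mem_erase.1 hy with ⟨hne, -⟩
    refine Finset.mem_erase.2 ⟨?_, Finset.mem_univ _⟩
    intro he
    apply hne
    rw [← Fin.rev_rev y, he, Fin.rev_rev]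
  · intro hx
    rcases Finset.mem_erase.1 hx with ⟨hne, -⟩
    refine ⟨x.rev, Finset.mem_erase.2 ⟨?_, Finset.mem_univ _⟩, Fin.rev_rev x⟩
    intro he
    apply hne
    rw [← he, Fin.rev_rev]

/-- the lower bound on generating sets -/
lemma lower_bound (hn : 2 ≤ n) (h4 : n % 4 = 0) (hn4 : 4 ≤ n)
    {G : Set (PT n)} (hG : (Submonoid.closure G : Set (PT n)) = AM n) :
    n / 2 + 1 ≤ G.ncard := by
  classical
  have hGsub : ∀ g ∈ G, g ∈ AM n := by
    intro g hg
    rw [← hG]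
    exact Submonoid.subset_closure hg
  -- hPT ∈ G
  have hhG : hPT n ∈ G := by
    have hh : hPT n ∈ Submonoid.closure G := by
      rw [show (hPT n ∈ Submonoid.closure G) = (hPT n ∈ (Submonoid.closure G : Set (PT n)))
        from rfl, hG]
      exact hPT_mem_AM (by omega) h4
    rcases Submonoid.exists_list_of_mem_closure hh with ⟨l, hlG, hlp⟩
    have hltop : ∀ g ∈ l, prank g = n := by
      apply list_prod_rank_top hn (fun g hg => hGsub g (hlG g hg))
      rw [hlp, prank_hPT]
    by_contra hhG
    have hall1 : ∀ g ∈ l, g = 1 := by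
      intro g hg
      rcases rank_n_cases hn (hGsub g (hlG g hg)) (hltop g hg) with h | h
      · exact h
      · exact absurd (h ▸ hlG g hg) hhG
    have : l.prod = 1 := list_prod_eq_one hall1
    rw [this] at hlp
    exact one_ne_hPT hn hlp
  -- for each small i, a rank n-1 generator with domain missing i or rev i
  have hchoice : ∀ i : Fin n, ∃ g, i.val < n / 2 → (g ∈ G ∧ prank g = n - 1 ∧
      (pDom g = Finset.univ.erase i ∨ pDom g = Finset.univ.erase i.rev)) := by
    intro i
    by_cases hi : i.val < n / 2
    · have hei : pidOn (Finset.univ.erase i) ∈ Submonoid.closure G := by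
        rw [show (pidOn (Finset.univ.erase i) ∈ Submonoid.closure G) =
          (pidOn (Finset.univ.erase i) ∈ (Submonoid.closure G : Set (PT n))) from rfl, hG]
        exact pidOn_mem_AM _
      rcases Submonoid.exists_list_of_mem_closure hei with ⟨l, hlG, hlp⟩
      have hrank : prank l.prod = n - 1 := by
        rw [hlp]
        show (pDom (pidOn _)).card = n - 1
        rw [pDom_pidOn, Finset.card_erase_of_mem (Finset.mem_univ i), Finset.card_univ,
          Fintype.card_fin]
      rcases rank_n1_factor hn h4 l (fun g hg => hGsub g (hlG g hg)) hrank
        with ⟨g, hgl, hgr, hgd⟩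
      rw [hlp, pDom_pidOn] at hgd
      refine ⟨g, fun _ => ⟨hlG g hgl, hgr, ?_⟩⟩
      rcases hgd with h | h
      · exact Or.inl h
      · right
        rw [h, image_rev_erase]
    · exact ⟨1, fun h => absurd h hi⟩
  choose gf hgf using hchoice
  set D : Finset (Fin n) := Finset.univ.filter (fun i => i.val < n / 2) with hD
  have hDcard : D.card = n / 2 := Ik_card (by omega)
  have hinj : ∀ i ∈ D, ∀ i' ∈ D, gf i = gf i' → i = i' := by
    intro i hiD i' hiD' he
    rw [hD, Finset.mem_filter] at hiD hiD'
    obtain ⟨h1, h2, h3⟩ := hgf i hiD.2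
    obtain ⟨h1', h2', h3'⟩ := hgf i' hiD'.2
    rw [he] at h3
    have hrv : ∀ (a : Fin n), a.val < n / 2 → (a.rev).val ≥ n / 2 := by
      intro a ha
      rw [rev_val]
      omega
    rcases h3 with h | h <;> rcases h3' with h' | h' <;> rw [h] at h'
    · exact erase_inj h'
    · exfalso
      have := congrArg Fin.val (erase_inj h')
      have := hrv i' hiD'.2
      rw [rev_val] at *
      omega
    · exfalso
      have := congrArg Fin.val (erase_inj h')
      have := hrv i hiD.2
      rw [rev_val] at *
      omega
    · have := erase_inj h'
      rw [← Fin.rev_rev i, this, Fin.rev_rev]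
  have hhni : hPT n ∉ D.image gf := by
    intro hmem
    rcases Finset.mem_image.1 hmem with ⟨i, hiD, hie⟩
    rw [hD, Finset.mem_filter] at hiD
    obtain ⟨-, h2, -⟩ := hgf i hiD.2
    rw [hie, prank_hPT] at h2
    omega
  have hTcard : (insert (hPT n) (D.image gf)).card = n / 2 + 1 := by
    rw [Finset.card_insert_of_notMem hhni, Finset.card_image_of_injOn hinj, hDcard]
  have hTsub : ↑(insert (hPT n) (D.image gf)) ⊆ G := by
    intro x hx
    rcases Finset.mem_insert.1 (by exact_mod_cast hx) with rfl | hx'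
    · exact hhG
    · rcases Finset.mem_image.1 hx' with ⟨i, hiD, hie⟩
      rw [hD, Finset.mem_filter] at hiD
      obtain ⟨h1, -, -⟩ := hgf i hiD.2
      exact hie ▸ h1
  calc n / 2 + 1 = (insert (hPT n) (D.image gf)).card := hTcard.symm
    _ = (↑(insert (hPT n) (D.image gf)) : Set (PT n)).ncard := (Set.ncard_coe_finset _).symm
    _ ≤ G.ncard := Set.ncard_le_ncard hTsub (Set.toFinite G)

end Minimal
/-- for `n ≡ 0 (mod 4)`, the displayed set of size `n/2 + 1` generates
`AM_n`, and no smaller set does; hence `AM_n` has rank `n/2 + 1`. -/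
theorem stmt18 {n : ℕ} (hn : 2 ≤ n) (h4 : n % 4 = 0) :
    (Submonoid.closure (AMgens0 n hn) : Set (PT n)) = AM n ∧
      (AMgens0 n hn).ncard = n / 2 + 1 ∧
      ∀ G : Set (PT n), (Submonoid.closure G : Set (PT n)) = AM n → n / 2 + 1 ≤ G.ncard := by
  have hn4 : 4 ≤ n := by omega
  refine ⟨clo_eq_AM hn h4 hn4, AMgens0_ncard hn h4 hn4, ?_⟩
  intro G hG
  exact lower_bound hn h4 hn4 hG
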